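/- arXiv:1707.01634 — 4 statements merged into one kernel-verified Lean document; each statement's English description precedes it below -/
import Mathlib

section
/- Let G be a connected non-complete graph whose cut edges induce a linear forest with components Q₁,…,Q_k ordered by size such that all components except possibly the largest are single edges (order 2) and the largest component Q_k has order at most 4; or whose cut-edge set is empty. Then cfc(G) = 2. -/
open SimpleGraph

/-- Degree of a vertex. -/
noncomputable def vdeg {V : Type*} (G : SimpleGraph V) (v : V) : ℕ := (G.neighborSet v).ncard

/-- An edge-coloring `c` makes `G` conflict-free connected if any two distinct vertices are
joined by a path on which some color appears on exactly one edge. -/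
def IsCFConnected {V : Type*} (G : SimpleGraph V) (c : Sym2 V → ℕ) : Prop :=
  ∀ u v : V, u ≠ v → ∃ p : G.Walk u v, p.IsPath ∧
    ∃ col : ℕ, (p.edges.filter (fun e => c e = col)).length = 1

/-- The conflict-free connection number of `G`. -/
noncomputable def cfcNum {V : Type*} (G : SimpleGraph V) : ℕ :=
  sInf {k | ∃ c : Sym2 V → ℕ, (∀ e ∈ G.edgeSet, c e < k) ∧ IsCFConnected G c}

/-- The subgraph `C(G)` spanned by the cut edges (bridges) of `G`. -/
def bridgeGraph {V : Type*} (G : SimpleGraph V) : SimpleGraph V :=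
  SimpleGraph.fromEdgeSet {e | G.IsBridge e}

/-- A linear forest: an acyclic graph with maximum degree at most two. -/
def IsLinearForest {V : Type*} (H : SimpleGraph V) : Prop :=
  H.IsAcyclic ∧ ∀ v, (H.neighborSet v).ncard ≤ 2


section Helpers

variable {V : Type*}

lemma mem_support_of_mem_edges' {H : SimpleGraph V} {u v : V} (q : H.Walk u v) {e : Sym2 V}
    (he : e ∈ q.edges) : ∀ z ∈ e, z ∈ q.support := by
  induction e using Sym2.ind with
  | _ a b =>
    intro z hz
    rcases Sym2.mem_iff.mp hz with rfl | rfl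
    · exact q.fst_mem_support_of_mem_edges he
    · exact q.snd_mem_support_of_mem_edges he

lemma reach_of_walk_avoid {H : SimpleGraph V} {u v : V} (p : H.Walk u v) {e : Sym2 V}
    (he : e ∉ p.edges) : (H \ fromEdgeSet {e}).Reachable u v := by
  refine ⟨p.transfer _ fun f hf => ?_⟩
  simp only [edgeSet_sdiff, edgeSet_fromEdgeSet, Set.mem_diff, Set.mem_singleton_iff]
  refine ⟨p.edges_subset_edgeSet hf, ?_⟩
  rintro ⟨rfl, -⟩
  exact he hf

lemma reach_ends_of_mem_edges {H : SimpleGraph V} {a b u v : V} (p : H.Walk u v)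
    (he : s(a,b) ∈ p.edges) :
    (H \ fromEdgeSet {s(a,b)}).Reachable u a ∨ (H \ fromEdgeSet {s(a,b)}).Reachable u b := by
  induction p with
  | nil => simp at he
  | @cons u w v h q ih =>
    by_cases hq : s(u, w) = s(a, b)
    · rcases Sym2.eq_iff.mp hq with ⟨rfl, rfl⟩ | ⟨rfl, rfl⟩
      · exact Or.inl (Reachable.refl _)
      · exact Or.inr (Reachable.refl _)
    · rw [Walk.edges_cons, List.mem_cons] at he
      rcases he with he | he
      · exact absurd he.symm hq
      · have hadj : (H \ fromEdgeSet {s(a,b)}).Adj u w := by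
          simp only [sdiff_adj, fromEdgeSet_adj]
          exact ⟨h, fun hw => hq (by simpa using hw.1)⟩
        rcases ih he with h1 | h1
        · exact Or.inl (hadj.reachable.trans h1)
        · exact Or.inr (hadj.reachable.trans h1)

lemma exists_crossing_edge {H : SimpleGraph V} (A : Set V) {u v : V} (p : H.Walk u v)
    (hu : u ∈ A) (hv : v ∉ A) : ∃ x y, H.Adj x y ∧ x ∈ A ∧ y ∉ A := by
  induction p with
  | nil => exact absurd hu hv
  | @cons u w v h q ih =>
    by_cases hw : w ∈ A
    · exact ih hw hv
    · exact ⟨u, w, h, hu, hw⟩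

lemma reachable_support [DecidableEq V] {H : SimpleGraph V} {u v : V} (p : H.Walk u v) {z : V}
    (hz : z ∈ p.support) : H.Reachable u z := ⟨p.takeUntil z hz⟩

lemma two_classes {T : SimpleGraph V} (hc : T.Connected) (a b z : V) :
    (T \ fromEdgeSet {s(a,b)}).Reachable z a ∨ (T \ fromEdgeSet {s(a,b)}).Reachable z b := by
  obtain ⟨p⟩ := hc.preconnected z a
  by_cases he : s(a,b) ∈ p.edges
  · exact reach_ends_of_mem_edges p he
  · exact Or.inl (reach_of_walk_avoid p he)

lemma tree_path_avoid [DecidableEq V] {T : SimpleGraph V} (hac : T.IsAcyclic) {u v : V}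
    (p : T.Walk u v) (hp : p.IsPath) {e : Sym2 V}
    (hr : (T \ fromEdgeSet {e}).Reachable u v) : e ∉ p.edges := by
  obtain ⟨w⟩ := hr
  have hsub : ∀ f ∈ w.bypass.edges, f ∈ T.edgeSet := by
    intro f hf
    exact (edgeSet_mono sdiff_le) (w.bypass.edges_subset_edgeSet hf)
  have hq : (w.bypass.transfer T hsub).IsPath := (w.bypass_isPath).transfer _
  have huniq := hac.path_unique ⟨p, hp⟩ ⟨w.bypass.transfer T hsub, hq⟩
  intro hmem
  have hedges : p.edges = w.bypass.edges := by
    have h1 : p = w.bypass.transfer T hsub := congrArg Subtype.val huniq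
    rw [h1, Walk.edges_transfer]
  rw [hedges] at hmem
  have hm2 := w.bypass.edges_subset_edgeSet hmem
  simp only [edgeSet_sdiff, edgeSet_fromEdgeSet, Set.mem_diff, Set.mem_singleton_iff] at hm2
  have hdiag : ¬ e.IsDiag :=
    T.not_isDiag_of_mem_edgeSet ((edgeSet_mono sdiff_le) (w.bypass.edges_subset_edgeSet hmem))
  tauto

lemma reach_delete_of_reach {G : SimpleGraph V} {x y : V}
    (hr : (G \ fromEdgeSet {s(x,y)}).Reachable x y) {u v : V} (huv : G.Reachable u v) :
    (G \ fromEdgeSet {s(x,y)}).Reachable u v := by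
  obtain ⟨p⟩ := huv
  induction p with
  | nil => exact Reachable.refl _
  | @cons u w v h q ih =>
    refine Reachable.trans ?_ ih
    by_cases he : s(u, w) = s(x, y)
    · rcases Sym2.eq_iff.mp he with ⟨rfl, rfl⟩ | ⟨rfl, rfl⟩
      · exact hr
      · exact hr.symm
    · refine Adj.reachable ?_
      simp only [sdiff_adj, fromEdgeSet_adj]
      exact ⟨h, fun hw => he (by simpa using hw.1)⟩

/-- A walk in `T \ e` avoiding `m` gives reachability in `T \ m`. -/
lemma reach_trans_del {T : SimpleGraph V} {e m : Sym2 V} {x y : V}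
    (p : (T \ fromEdgeSet {e}).Walk x y) (hm : m ∉ p.edges) :
    (T \ fromEdgeSet {m}).Reachable x y := by
  refine ⟨p.transfer _ fun f hf => ?_⟩
  have hfT : f ∈ T.edgeSet := (edgeSet_mono sdiff_le) (p.edges_subset_edgeSet hf)
  simp only [edgeSet_sdiff, edgeSet_fromEdgeSet, Set.mem_diff, Set.mem_singleton_iff]
  refine ⟨hfT, ?_⟩
  rintro ⟨rfl, -⟩
  exact hm hf

/-- Reachability in `G` minus a bridge implies reachability in a spanning tree minus it. -/
lemma bridge_reach_tree [DecidableEq V] {G T : SimpleGraph V} (hTG : T ≤ G) (hTc : T.Connected)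
    (hac : T.IsAcyclic) {m : Sym2 V} (hm : G.IsBridge m) {z w : V}
    (h : (G \ fromEdgeSet {m}).Reachable z w) : (T \ fromEdgeSet {m}).Reachable z w := by
  induction m using Sym2.ind with
  | _ α β =>
    obtain ⟨p⟩ := h
    induction p with
    | nil => exact Reachable.refl _
    | @cons z t w hadj q ih =>
      refine Reachable.trans ?_ ih
      have hGadj : G.Adj z t := by
        have := hadj; rw [sdiff_adj] at this; exact this.1
      have hne : s(z, t) ≠ s(α, β) := by
        have := hadj; rw [sdiff_adj, fromEdgeSet_adj] at this
        exact fun hc => this.2 ⟨hc, hGadj.ne⟩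
      obtain ⟨p0⟩ := hTc.preconnected z t
      by_cases hmem : s(α, β) ∈ p0.edges
      · rcases reach_ends_of_mem_edges p0 hmem with h1 | h1 <;>
          rcases reach_ends_of_mem_edges p0.reverse (by rwa [Walk.edges_reverse, List.mem_reverse])
            with h2 | h2
        · exact h1.trans h2.symm
        · -- z ~ α, t ~ β: contradiction with bridge
          exfalso
          rw [isBridge_iff] at hm
          refine hm ?_
          have hza : (G \ fromEdgeSet {s(α,β)}).Reachable z α := h1.mono (sdiff_le_sdiff_right hTG)
          have htb : (G \ fromEdgeSet {s(α,β)}).Reachable t β := h2.mono (sdiff_le_sdiff_right hTG)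
          have hzt : (G \ fromEdgeSet {s(α,β)}).Reachable z t := by
            refine Adj.reachable ?_
            rw [sdiff_adj, fromEdgeSet_adj]
            exact ⟨hGadj, fun hc => hne hc.1⟩
          exact (hza.symm.trans hzt).trans htb
        · exfalso
          rw [isBridge_iff] at hm
          refine hm ?_
          have hza : (G \ fromEdgeSet {s(α,β)}).Reachable z β := h1.mono (sdiff_le_sdiff_right hTG)
          have htb : (G \ fromEdgeSet {s(α,β)}).Reachable t α := h2.mono (sdiff_le_sdiff_right hTG)
          have hzt : (G \ fromEdgeSet {s(α,β)}).Reachable z t := by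
            refine Adj.reachable ?_
            rw [sdiff_adj, fromEdgeSet_adj]
            exact ⟨hGadj, fun hc => hne hc.1⟩
          exact (htb.symm.trans hzt.symm).trans hza
        · exact h1.trans h2.symm
      · exact reach_of_walk_avoid p0 hmem

lemma exists_spanning_tree [Fintype V] (G : SimpleGraph V) (h : G.Connected) :
    ∃ T, T ≤ G ∧ T.Connected ∧ T.IsAcyclic := by
  classical
  suffices H : ∀ n (G : SimpleGraph V), G.Connected → G.edgeSet.ncard = n →
      ∃ T, T ≤ G ∧ T.Connected ∧ T.IsAcyclic by exact H _ G h rfl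
  intro n
  induction n using Nat.strong_induction_on with
  | _ n ih =>
    intro G hG hn
    by_cases hac : G.IsAcyclic
    · exact ⟨G, le_refl _, hG, hac⟩
    · rw [isAcyclic_iff_forall_adj_isBridge] at hac
      push_neg at hac
      obtain ⟨x, y, hxy, hnb⟩ := hac
      rw [isBridge_iff] at hnb
      push_neg at hnb
      have hr : (G \ fromEdgeSet {s(x,y)}).Reachable x y := hnb
      set G' := G \ fromEdgeSet {s(x,y)} with hG'
      have hG'conn : G'.Connected := by
        haveI := hG.nonempty
        exact ⟨fun u v => reach_delete_of_reach hr (hG.preconnected u v)⟩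
      have hE : G'.edgeSet = G.edgeSet \ {s(x,y)} := by
        ext f
        simp only [hG', edgeSet_sdiff, edgeSet_fromEdgeSet, Set.mem_diff, Set.mem_singleton_iff,
          Set.mem_setOf_eq]
        constructor
        · rintro ⟨hf, hf2⟩
          refine ⟨hf, ?_⟩
          rintro rfl
          exact hf2 ⟨rfl, by simpa using hxy.ne⟩
        · rintro ⟨hf, hf2⟩
          exact ⟨hf, fun hc => hf2 hc.1⟩
      have hlt : G'.edgeSet.ncard < n := by
        rw [hE, ← hn]
        exact Set.ncard_diff_singleton_lt_of_mem hxy (Set.toFinite _)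
      obtain ⟨T, hT1, hT2, hT3⟩ := ih _ hlt G' hG'conn rfl
      exact ⟨T, hT1.trans sdiff_le, hT2, hT3⟩

lemma bridge_mem_tree {G T : SimpleGraph V} (hTG : T ≤ G) (hTc : T.Connected)
    {e : Sym2 V} (he : G.IsBridge e) : e ∈ T.edgeSet := by
  induction e using Sym2.ind with
  | _ x y =>
    rw [isBridge_iff_adj_and_forall_walk_mem_edges] at he
    obtain ⟨p⟩ := hTc.preconnected x y
    have := he (p.transfer G (fun f hf => (edgeSet_mono hTG) (p.edges_subset_edgeSet hf)))
    rw [Walk.edges_transfer] at this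
    exact p.edges_subset_edgeSet this

/-- No triangles in an acyclic graph. -/
lemma acyclic_no_triangle {B : SimpleGraph V} (hB : B.IsAcyclic) {x y z : V}
    (hxy : B.Adj x y) (hyz : B.Adj y z) (hxz : B.Adj x z) : False := by
  have hp1 : (Walk.cons hxz Walk.nil : B.Walk x z).IsPath := by
    simp [Walk.isPath_def, hxz.ne]
  have hp2 : (Walk.cons hxy (Walk.cons hyz Walk.nil) : B.Walk x z).IsPath := by
    simp [Walk.isPath_def, hxy.ne, hxz.ne, hyz.ne]
  have := hB.path_unique ⟨_, hp1⟩ ⟨_, hp2⟩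
  have hl := congrArg (fun (q : B.Path x z) => (q : B.Walk x z).length) this
  simp at hl

/-- No 4-cycles in an acyclic graph. -/
lemma acyclic_no_square {B : SimpleGraph V} (hB : B.IsAcyclic) {w x y z : V}
    (hwx : B.Adj w x) (hxy : B.Adj x y) (hyz : B.Adj y z) (hwz : B.Adj w z)
    (hwy : w ≠ y) (hxz : x ≠ z) : False := by
  have hp1 : (Walk.cons hwz Walk.nil : B.Walk w z).IsPath := by
    simp [Walk.isPath_def, hwz.ne]
  have hp2 : (Walk.cons hwx (Walk.cons hxy (Walk.cons hyz Walk.nil)) : B.Walk w z).IsPath := by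
    simp [Walk.isPath_def, hwx.ne, hxy.ne, hyz.ne, hwy, hwz.ne, hxz]
  have := hB.path_unique ⟨_, hp1⟩ ⟨_, hp2⟩
  have hl := congrArg (fun (q : B.Path w z) => (q : B.Walk w z).length) this
  simp at hl

/-- Degree at most 2: no three distinct neighbors. -/
lemma deg2_no_three [Fintype V] {B : SimpleGraph V} (hd : ∀ v, (B.neighborSet v).ncard ≤ 2) {b x y z : V}
    (h1 : B.Adj b x) (h2 : B.Adj b y) (h3 : B.Adj b z)
    (hxy : x ≠ y) (hxz : x ≠ z) (hyz : y ≠ z) : False := by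
  have hsub : ({x, y, z} : Set V) ⊆ B.neighborSet b := by
    intro t ht
    rcases ht with rfl | rfl | rfl <;> assumption
  have h3le : ({x, y, z} : Set V).ncard ≤ 2 := by
    classical
    calc ({x, y, z} : Set V).ncard ≤ (B.neighborSet b).ncard :=
          Set.ncard_le_ncard hsub (Set.toFinite _)
      _ ≤ 2 := hd b
  rw [Set.ncard_insert_of_notMem (by simp [hxy, hxz]) (Set.toFinite _),
    Set.ncard_pair hyz] at h3le
  omega

/-- Counting: a list with nodup containing `m`, where predicate holds exactly at `m`. -/
lemma filter_len_one {α : Type*} {l : List α} {m : α} (hn : l.Nodup) (hm : m ∈ l)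
    (p : α → Bool) (hp : ∀ a ∈ l, p a = true ↔ a = m) : (l.filter p).length = 1 := by
  induction l with
  | nil => cases hm
  | cons a t ih =>
    rw [List.filter_cons]
    rcases List.mem_cons.mp hm with heq | hm'
    · have hpa : p a = true := (hp a List.mem_cons_self).mpr heq.symm
      rw [if_pos hpa]
      have ht : t.filter p = [] := by
        rw [List.filter_eq_nil_iff]
        intro b hb hpb
        have hba : b = m := (hp b (List.mem_cons_of_mem a hb)).mp hpb
        exact (List.nodup_cons.mp hn).1 ((hba.trans heq) ▸ hb)
      simp [ht]
    · have hpa : ¬ p a = true := by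
        intro h
        have : a = m := (hp a List.mem_cons_self).mp h
        exact (List.nodup_cons.mp hn).1 (this ▸ hm')
      rw [if_neg hpa]
      exact ih (List.nodup_cons.mp hn).2 hm' (fun b hb => hp b (List.mem_cons_of_mem a hb))

lemma acyclic_no_triangle' {B : SimpleGraph V} (hB : B.IsAcyclic) {x y z : V}
    (hxy : B.Adj x y) (hyz : B.Adj y z) (hxz : B.Adj x z) : False := by
  have hp1 : (Walk.cons hxz Walk.nil : B.Walk x z).IsPath := by
    simp [Walk.isPath_def, hxz.ne]
  have hp2 : (Walk.cons hxy (Walk.cons hyz Walk.nil) : B.Walk x z).IsPath := by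
    simp [Walk.isPath_def, hxy.ne, hxz.ne, hyz.ne]
  have := hB.path_unique ⟨_, hp1⟩ ⟨_, hp2⟩
  have hl := congrArg (fun (q : B.Path x z) => (q : B.Walk x z).length) this
  simp at hl

lemma acyclic_no_square' {B : SimpleGraph V} (hB : B.IsAcyclic) {w x y z : V}
    (hwx : B.Adj w x) (hxy : B.Adj x y) (hyz : B.Adj y z) (hwz : B.Adj w z)
    (hwy : w ≠ y) (hxz : x ≠ z) : False := by
  have hp1 : (Walk.cons hwz Walk.nil : B.Walk w z).IsPath := by
    simp [Walk.isPath_def, hwz.ne]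
  have hp2 : (Walk.cons hwx (Walk.cons hxy (Walk.cons hyz Walk.nil)) : B.Walk w z).IsPath := by
    simp [Walk.isPath_def, hwx.ne, hxy.ne, hyz.ne, hwy, hwz.ne, hxz]
  have := hB.path_unique ⟨_, hp1⟩ ⟨_, hp2⟩
  have hl := congrArg (fun (q : B.Path w z) => (q : B.Walk w z).length) this
  simp at hl

lemma deg2_no_three' [Fintype V] {B : SimpleGraph V}
    (hd : ∀ v, (B.neighborSet v).ncard ≤ 2) {b x y z : V}
    (h1 : B.Adj b x) (h2 : B.Adj b y) (h3 : B.Adj b z)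
    (hxy : x ≠ y) (hxz : x ≠ z) (hyz : y ≠ z) : False := by
  have hsub : ({x, y, z} : Set V) ⊆ B.neighborSet b := by
    intro t ht
    rcases ht with rfl | rfl | rfl <;> assumption
  have h3le : ({x, y, z} : Set V).ncard ≤ 2 :=
    le_trans (Set.ncard_le_ncard hsub (Set.toFinite _)) (hd b)
  rw [Set.ncard_insert_of_notMem (by simp [hxy, hxz]) (Set.toFinite _),
    Set.ncard_pair hyz] at h3le
  omega

lemma supp_eq_of_four [Fintype V] {B : SimpleGraph V} {C : B.ConnectedComponent}
    (hsize : C.supp.ncard ≤ 4) {w x y z : V}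
    (hw : w ∈ C.supp) (hx : x ∈ C.supp) (hy : y ∈ C.supp) (hz : z ∈ C.supp)
    (hwx : w ≠ x) (hwy : w ≠ y) (hwz : w ≠ z) (hxy : x ≠ y) (hxz : x ≠ z) (hyz : y ≠ z) :
    C.supp = {w, x, y, z} := by
  have hsub : ({w, x, y, z} : Set V) ⊆ C.supp := by
    intro t ht
    rcases ht with rfl | rfl | rfl | rfl <;> assumption
  have hcard : ({w, x, y, z} : Set V).ncard = 4 := by
    rw [Set.ncard_insert_of_notMem (by simp [hwx, hwy, hwz]) (Set.toFinite _),
      Set.ncard_insert_of_notMem (by simp [hxy, hxz]) (Set.toFinite _),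
      Set.ncard_pair hyz]
  exact (Set.eq_of_subset_of_ncard_le hsub (by omega) (Set.toFinite _)).symm

lemma core_abstract [Fintype V] {B : SimpleGraph V} (hac : B.IsAcyclic)
    (hdeg : ∀ v, (B.neighborSet v).ncard ≤ 2)
    (hsize : ∀ C : B.ConnectedComponent, C.supp.ncard ≤ 4)
    (huniq : ∀ C C' : B.ConnectedComponent, 3 ≤ C.supp.ncard → 3 ≤ C'.supp.ncard → C = C') :
    ∃ S : Set (Sym2 V), (∀ m ∈ S, m ∈ B.edgeSet) ∧ (∀ m ∈ S, ∀ m' ∈ S, m = m') ∧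
      (∀ a b c : V, a ≠ c → B.Adj a b → B.Adj b c → s(a,b) ∈ S ∨ s(b,c) ∈ S) := by
  classical
  set Ctr : V → Prop := fun b => ∃ a c, a ≠ c ∧ B.Adj b a ∧ B.Adj b c with hCtr
  have hcomp3 : ∀ b : V, Ctr b → 3 ≤ (B.connectedComponentMk b).supp.ncard := by
    rintro b ⟨a, c, hacn, h1, h2⟩
    have hsub : ({a, b, c} : Set V) ⊆ (B.connectedComponentMk b).supp := by
      intro t ht
      rcases ht with rfl | rfl | rfl
      · exact (ConnectedComponent.mem_supp_iff _ _).mpr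
          (ConnectedComponent.connectedComponentMk_eq_of_adj h1).symm
      · exact (ConnectedComponent.mem_supp_iff _ _).mpr rfl
      · exact (ConnectedComponent.mem_supp_iff _ _).mpr
          (ConnectedComponent.connectedComponentMk_eq_of_adj h2).symm
    have hcard : ({a, b, c} : Set V).ncard = 3 := by
      rw [Set.ncard_insert_of_notMem (by simp [h1.ne', hacn]) (Set.toFinite _),
        Set.ncard_pair h2.ne]
    calc 3 = ({a, b, c} : Set V).ncard := hcard.symm
      _ ≤ _ := Set.ncard_le_ncard hsub (Set.toFinite _)
  by_cases h0 : ∃ b, Ctr b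
  · obtain ⟨b₀, a₀, c₀, hac₀, h0a, h0c⟩ := h0
    by_cases h1 : ∃ b₁, b₁ ≠ b₀ ∧ Ctr b₁
    · obtain ⟨b₁, hne01, a₁, c₁, hac₁, h1a, h1c⟩ := h1
      have hK : B.connectedComponentMk b₁ = B.connectedComponentMk b₀ :=
        huniq _ _ (hcomp3 _ ⟨a₁, c₁, hac₁, h1a, h1c⟩) (hcomp3 _ ⟨a₀, c₀, hac₀, h0a, h0c⟩)
      have hadj01 : B.Adj b₀ b₁ := by
        by_contra hno
        have hb1a0 : b₁ ≠ a₀ := fun h => hno (h ▸ h0a)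
        have hb1c0 : b₁ ≠ c₀ := fun h => hno (h ▸ h0c)
        have hsupp : (B.connectedComponentMk b₀).supp = {a₀, b₀, c₀, b₁} :=
          supp_eq_of_four (hsize _)
            ((ConnectedComponent.mem_supp_iff _ _).mpr
              ((ConnectedComponent.connectedComponentMk_eq_of_adj h0a).symm))
            ((ConnectedComponent.mem_supp_iff _ _).mpr rfl)
            ((ConnectedComponent.mem_supp_iff _ _).mpr
              ((ConnectedComponent.connectedComponentMk_eq_of_adj h0c).symm))
            ((ConnectedComponent.mem_supp_iff _ _).mpr hK)
            h0a.ne' hac₀ hb1a0.symm h0c.ne (Ne.symm hne01) hb1c0.symm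
        have hmem : ∀ t : V, B.Adj b₁ t → t = a₀ ∨ t = c₀ := by
          intro t ht
          have htm : t ∈ (B.connectedComponentMk b₀).supp := by
            rw [ConnectedComponent.mem_supp_iff]
            exact (ConnectedComponent.connectedComponentMk_eq_of_adj ht.symm).trans hK
          rw [hsupp] at htm
          have htb0 : t ≠ b₀ := fun h => hno ((h ▸ ht).symm)
          have htb1 : t ≠ b₁ := ht.ne'
          rcases htm with rfl | rfl | rfl | rfl
          · exact Or.inl rfl
          · exact absurd rfl htb0
          · exact Or.inr rfl
          · exact absurd rfl htb1
        have ha0adj : B.Adj b₁ a₀ ∧ B.Adj b₁ c₀ := by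
          rcases hmem a₁ h1a with rfl | rfl <;> rcases hmem c₁ h1c with rfl | rfl
          · exact absurd rfl hac₁
          · exact ⟨h1a, h1c⟩
          · exact ⟨h1c, h1a⟩
          · exact absurd rfl hac₁
        exact acyclic_no_square' hac h0a ha0adj.1.symm ha0adj.2 h0c hne01.symm hac₀
      -- other neighbors d₀ of b₀ and d₁ of b₁
      have hb1mem : b₁ = a₀ ∨ b₁ = c₀ := by
        by_contra hcon
        push_neg at hcon
        exact deg2_no_three' hdeg h0a h0c hadj01 hac₀ (Ne.symm hcon.1) (Ne.symm hcon.2)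
      obtain ⟨d₀, hd₀adj, hd₀ne⟩ : ∃ d, B.Adj b₀ d ∧ d ≠ b₁ := by
        rcases hb1mem with rfl | rfl
        · exact ⟨c₀, h0c, hac₀.symm⟩
        · exact ⟨a₀, h0a, hac₀⟩
      have hb0mem : b₀ = a₁ ∨ b₀ = c₁ := by
        by_contra hcon
        push_neg at hcon
        exact deg2_no_three' hdeg h1a h1c hadj01.symm hac₁ (Ne.symm hcon.1) (Ne.symm hcon.2)
      obtain ⟨d₁, hd₁adj, hd₁ne⟩ : ∃ d, B.Adj b₁ d ∧ d ≠ b₀ := by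
        rcases hb0mem with rfl | rfl
        · exact ⟨c₁, h1c, hac₁.symm⟩
        · exact ⟨a₁, h1a, hac₁⟩
      have hd01 : d₀ ≠ d₁ := by
        rintro rfl
        exact acyclic_no_triangle' hac hd₀adj.symm hadj01 hd₁adj.symm
      have hsupp : (B.connectedComponentMk b₀).supp = {d₀, b₀, b₁, d₁} :=
        supp_eq_of_four (hsize _)
          ((ConnectedComponent.mem_supp_iff _ _).mpr
            (ConnectedComponent.connectedComponentMk_eq_of_adj hd₀adj.symm))
          ((ConnectedComponent.mem_supp_iff _ _).mpr rfl)
          ((ConnectedComponent.mem_supp_iff _ _).mpr hK)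
          ((ConnectedComponent.mem_supp_iff _ _).mpr
            ((ConnectedComponent.connectedComponentMk_eq_of_adj hd₁adj.symm).trans hK))
          hd₀adj.ne' hd₀ne hd01 (by exact hadj01.ne) hd₁ne.symm hd₁adj.ne
      -- no other centers
      have hctr_mem : ∀ b, Ctr b → b = b₀ ∨ b = b₁ := by
        rintro b ⟨a, c, hacn, hba, hbc⟩
        by_contra hcon
        push_neg at hcon
        have hbK : b ∈ (B.connectedComponentMk b₀).supp := by
          rw [ConnectedComponent.mem_supp_iff]
          exact (huniq _ _ (hcomp3 _ ⟨a, c, hacn, hba, hbc⟩)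
            (hcomp3 _ ⟨a₀, c₀, hac₀, h0a, h0c⟩))
        rw [hsupp] at hbK
        -- b = d₀ or b = d₁
        have hbd : (b = d₀ ∧ B.Adj b b₀) ∨ (b = d₁ ∧ B.Adj b b₁) := by
          rcases hbK with rfl | rfl | rfl | rfl
          · exact Or.inl ⟨rfl, hd₀adj.symm⟩
          · exact absurd rfl hcon.1
          · exact absurd rfl hcon.2
          · exact Or.inr ⟨rfl, hd₁adj.symm⟩
        rcases hbd with ⟨rfl, hadjb⟩ | ⟨rfl, hadjb⟩
        · -- b = d₀, neighbors a c; b₀ is one of them, other z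
          have hz : b₀ = a ∨ b₀ = c := by
            by_contra hcc
            push_neg at hcc
            exact deg2_no_three' hdeg hba hbc hadjb hacn (Ne.symm hcc.1) (Ne.symm hcc.2)
          obtain ⟨z, hzadj, hzne⟩ : ∃ z, B.Adj b z ∧ z ≠ b₀ := by
            rcases hz with rfl | rfl
            · exact ⟨c, hbc, hacn.symm⟩
            · exact ⟨a, hba, hacn⟩
          have hzK : z ∈ (B.connectedComponentMk b₀).supp := by
            rw [ConnectedComponent.mem_supp_iff]
            exact (ConnectedComponent.connectedComponentMk_eq_of_adj hzadj.symm).trans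
              ((ConnectedComponent.connectedComponentMk_eq_of_adj hd₀adj.symm))
          rw [hsupp] at hzK
          rcases hzK with rfl | rfl | rfl | rfl
          · exact hzadj.ne rfl
          · exact hzne rfl
          · exact acyclic_no_triangle' hac hd₀adj.symm hadj01 hzadj
          · exact acyclic_no_square' hac hd₀adj.symm hadj01 hd₁adj hzadj hd₀ne hd₁ne.symm
        · -- b = d₁ symmetric
          have hz : b₁ = a ∨ b₁ = c := by
            by_contra hcc
            push_neg at hcc
            exact deg2_no_three' hdeg hba hbc hadjb hacn (Ne.symm hcc.1) (Ne.symm hcc.2)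
          obtain ⟨z, hzadj, hzne⟩ : ∃ z, B.Adj b z ∧ z ≠ b₁ := by
            rcases hz with rfl | rfl
            · exact ⟨c, hbc, hacn.symm⟩
            · exact ⟨a, hba, hacn⟩
          have hzK : z ∈ (B.connectedComponentMk b₀).supp := by
            rw [ConnectedComponent.mem_supp_iff]
            exact ((ConnectedComponent.connectedComponentMk_eq_of_adj hzadj.symm).trans
              ((ConnectedComponent.connectedComponentMk_eq_of_adj hd₁adj.symm))).trans hK
          rw [hsupp] at hzK
          rcases hzK with rfl | rfl | rfl | rfl
          · exact acyclic_no_square' hac hd₁adj.symm hadj01.symm hd₀adj hzadj hd₁ne hd₀ne.symm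
          · exact acyclic_no_triangle' hac hd₁adj.symm hadj01.symm hzadj
          · exact hzne rfl
          · exact hzadj.ne rfl
      refine ⟨{s(b₀, b₁)}, ?_, ?_, ?_⟩
      · intro m hm
        rw [Set.mem_singleton_iff] at hm
        subst hm
        exact hadj01
      · intro m hm m' hm'
        rw [Set.mem_singleton_iff] at hm hm'
        rw [hm, hm']
      · intro a b c hne hb1 hb2
        rcases hctr_mem b ⟨a, c, hne, hb1.symm, hb2⟩ with rfl | rfl
        · -- b = b₀ : b₁ ∈ {a, c}
          have : b₁ = a ∨ b₁ = c := by
            by_contra hcc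
            push_neg at hcc
            exact deg2_no_three' hdeg hb1.symm hb2 hadj01 hne (Ne.symm hcc.1) (Ne.symm hcc.2)
          rcases this with rfl | rfl
          · exact Or.inl (Sym2.eq_swap)
          · exact Or.inr rfl
        · -- b = b₁ : b₀ ∈ {a, c}
          have : b₀ = a ∨ b₀ = c := by
            by_contra hcc
            push_neg at hcc
            exact deg2_no_three' hdeg hb1.symm hb2 hadj01.symm hne (Ne.symm hcc.1) (Ne.symm hcc.2)
          rcases this with rfl | rfl
          · exact Or.inl rfl
          · exact Or.inr (Sym2.eq_swap)
    · -- single center b₀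
      push_neg at h1
      refine ⟨{s(b₀, a₀)}, ?_, ?_, ?_⟩
      · intro m hm
        rw [Set.mem_singleton_iff] at hm
        subst hm
        exact h0a
      · intro m hm m' hm'
        rw [Set.mem_singleton_iff] at hm hm'
        rw [hm, hm']
      · intro a b c hne hb1 hb2
        have hb : b = b₀ := by
          by_contra hb
          exact h1 b hb ⟨a, c, hne, hb1.symm, hb2⟩
        subst hb
        have : a₀ = a ∨ a₀ = c := by
          by_contra hcc
          push_neg at hcc
          exact deg2_no_three' hdeg hb1.symm hb2 h0a hne (Ne.symm hcc.1) (Ne.symm hcc.2)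
        rcases this with rfl | rfl
        · exact Or.inl (Sym2.eq_swap)
        · exact Or.inr rfl
  · push_neg at h0
    refine ⟨∅, by simp, by simp, ?_⟩
    intro a b c hne hb1 hb2
    exact absurd ⟨a, c, hne, hb1.symm, hb2⟩ (h0 b)
variable {V : Type*}

section
variable [DecidableEq V]

lemma case2_aux {G T : SimpleGraph V} (hTG : T ≤ G) (hTc : T.Connected)
    (hac : T.IsAcyclic) (S : Set (Sym2 V)) (hSb : ∀ m ∈ S, G.IsBridge m)
    {u v a b : V} (p0 : T.Walk u v) (hp0 : p0.IsPath)
    (hab : s(a,b) ∈ p0.edges) (hnbr : ¬ G.IsBridge s(a,b))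
    (hS0 : ∀ m ∈ S, m ∉ p0.edges)
    (hua : (T \ fromEdgeSet {s(a,b)}).Reachable u a) :
    ∃ (x1 y1 : V) (q1 : G.Walk u x1) (q2 : G.Walk y1 v) (h : G.Adj x1 y1),
      (q1.append (Walk.cons h q2)).IsPath ∧
      (∀ e ∈ q1.edges, e ∈ T.edgeSet ∧ e ∉ S) ∧
      (∀ e ∈ q2.edges, e ∈ T.edgeSet ∧ e ∉ S) ∧ s(x1,y1) ∉ T.edgeSet := by
  set T' := T \ fromEdgeSet {s(a,b)} with hT'def
  have hTadj : T.Adj a b := p0.adj_of_mem_edges hab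
  have hGab : G.Adj a b := hTG hTadj
  have hnuv : ¬ T'.Reachable u v := fun hr => (tree_path_avoid hac p0 hp0 hr) hab
  have hvb : T'.Reachable v b := by
    rcases two_classes hTc a b v with h | h
    · exact absurd (hua.trans h.symm) hnuv
    · exact h
  have hbu : ¬ T'.Reachable u b := fun h => hnuv (h.trans hvb.symm)
  -- the component of u in T'
  have hGr : (G \ fromEdgeSet {s(a,b)}).Reachable a b := by
    rw [isBridge_iff] at hnbr
    push_neg at hnbr
    exact hnbr
  obtain ⟨w⟩ := hGr
  obtain ⟨x1, y1, hxyadj, hx1A, hy1A⟩ :=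
    exists_crossing_edge {z | T'.Reachable u z} w hua (by exact hbu)
  have hx1A : T'.Reachable u x1 := hx1A
  have hy1A : ¬ T'.Reachable u y1 := hy1A
  have hGxy : G.Adj x1 y1 := by
    have h2 := hxyadj; rw [sdiff_adj] at h2; exact h2.1
  have hxyne : s(x1,y1) ≠ s(a,b) := by
    have h2 := hxyadj; rw [sdiff_adj, fromEdgeSet_adj] at h2
    exact fun hc => h2.2 ⟨hc, hGxy.ne⟩
  have hchord : s(x1,y1) ∉ T.edgeSet := by
    intro hmem
    have hT'adj : T'.Adj x1 y1 := by
      rw [hT'def, sdiff_adj, fromEdgeSet_adj]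
      exact ⟨(T.mem_edgeSet).mp hmem, fun hc => hxyne hc.1⟩
    exact hy1A (hx1A.trans hT'adj.reachable)
  have hy1v : T'.Reachable y1 v := by
    rcases two_classes hTc a b y1 with h | h
    · exact absurd (hua.trans h.symm) hy1A
    · exact h.trans hvb.symm
  obtain ⟨w1⟩ := hx1A
  obtain ⟨w2⟩ := hy1v
  set q1' := w1.bypass with hq1'def
  set q2' := w2.bypass with hq2'def
  have hq1'p : q1'.IsPath := w1.bypass_isPath
  have hq2'p : q2'.IsPath := w2.bypass_isPath
  have hq1A : ∀ z ∈ q1'.support, T'.Reachable u z := fun z hz => reachable_support q1' hz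
  have hq2A : ∀ z ∈ q2'.support, ¬ T'.Reachable u z := by
    intro z hz hcon
    exact hy1A (hcon.trans (reachable_support q2' hz).symm)
  -- S avoidance
  have hSavoid : ∀ m ∈ S, m ∉ q1'.edges ∧ m ∉ q2'.edges := by
    intro m hmS
    have hmbr := hSb m hmS
    have hmT : m ∈ T.edgeSet := bridge_mem_tree hTG hTc hmbr
    have hp0m : m ∉ p0.edges := hS0 m hmS
    have hRua : (T \ fromEdgeSet {m}).Reachable u a := by
      have ha' : a ∈ p0.support := p0.fst_mem_support_of_mem_edges hab
      refine reach_of_walk_avoid (p0.takeUntil a ha') ?_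
      exact fun hc => hp0m (p0.edges_takeUntil_subset ha' hc)
    have hRub : (T \ fromEdgeSet {m}).Reachable u b := by
      have hb' : b ∈ p0.support := p0.snd_mem_support_of_mem_edges hab
      refine reach_of_walk_avoid (p0.takeUntil b hb') ?_
      exact fun hc => hp0m (p0.edges_takeUntil_subset hb' hc)
    have hRuv : (T \ fromEdgeSet {m}).Reachable u v := reach_of_walk_avoid p0 hp0m
    have hRxy : (T \ fromEdgeSet {m}).Reachable x1 y1 := by
      refine bridge_reach_tree hTG hTc hac hmbr (Adj.reachable ?_)
      rw [sdiff_adj, fromEdgeSet_adj]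
      exact ⟨hGxy, fun hc => hchord (hc.1 ▸ hmT)⟩
    have hRux1 : (T \ fromEdgeSet {m}).Reachable u x1 := by
      by_cases hside : ∀ z ∈ m, T'.Reachable u z
      · -- both endpoints of m are on the u-side; connect through the other side
        have hy1b : T'.Reachable y1 b := by
          rcases two_classes hTc a b y1 with h | h
          · exact absurd (hua.trans h.symm) hy1A
          · exact h
        obtain ⟨wb⟩ := hy1b
        have hmwb : m ∉ wb.bypass.edges := by
          intro hc
          have hz := mem_support_of_mem_edges' wb.bypass hc
          have hz0 : m.out.1 ∈ m := Sym2.out_fst_mem m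
          exact hy1A ((hside m.out.1 hz0).trans
            (reachable_support wb.bypass (hz m.out.1 hz0)).symm)
        have hRy1b : (T \ fromEdgeSet {m}).Reachable y1 b := reach_trans_del wb.bypass hmwb
        exact ((hRub.trans hRy1b.symm).trans hRxy.symm)
      · push_neg at hside
        obtain ⟨z0, hz0m, hz0A⟩ := hside
        have hmq1 : m ∉ q1'.edges := by
          intro hc
          exact hz0A (hq1A z0 (mem_support_of_mem_edges' q1' hc z0 hz0m))
        exact reach_trans_del q1' hmq1
    have hRy1v : (T \ fromEdgeSet {m}).Reachable y1 v := (hRxy.symm.trans hRux1.symm).trans hRuv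
    constructor
    · have hsub1 : ∀ f ∈ q1'.edges, f ∈ T.edgeSet :=
        fun f hf => (edgeSet_mono sdiff_le) (q1'.edges_subset_edgeSet hf)
      have := tree_path_avoid hac (q1'.transfer T hsub1) (hq1'p.transfer _) hRux1
      rwa [Walk.edges_transfer] at this
    · have hsub2 : ∀ f ∈ q2'.edges, f ∈ T.edgeSet :=
        fun f hf => (edgeSet_mono sdiff_le) (q2'.edges_subset_edgeSet hf)
      have := tree_path_avoid hac (q2'.transfer T hsub2) (hq2'p.transfer _) hRy1v
      rwa [Walk.edges_transfer] at this
  -- assemble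
  have hsubG1 : ∀ f ∈ q1'.edges, f ∈ G.edgeSet :=
    fun f hf => (edgeSet_mono (le_trans sdiff_le hTG)) (q1'.edges_subset_edgeSet hf)
  have hsubG2 : ∀ f ∈ q2'.edges, f ∈ G.edgeSet :=
    fun f hf => (edgeSet_mono (le_trans sdiff_le hTG)) (q2'.edges_subset_edgeSet hf)
  refine ⟨x1, y1, q1'.transfer G hsubG1, q2'.transfer G hsubG2, hGxy, ?_, ?_, ?_, hchord⟩
  · rw [Walk.isPath_def, Walk.support_append, Walk.support_cons]
    have htail : (x1 :: (q2'.transfer G hsubG2).support).tail = q2'.support := by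
      rw [List.tail_cons, Walk.support_transfer]
    rw [htail, Walk.support_transfer]
    rw [List.nodup_append]
    refine ⟨hq1'p.support_nodup, hq2'p.support_nodup, ?_⟩
    intro z hz1 z' hz2 hzz
    exact hq2A z' hz2 (hzz ▸ hq1A z hz1)
  · intro e he
    rw [Walk.edges_transfer] at he
    exact ⟨(edgeSet_mono sdiff_le) (q1'.edges_subset_edgeSet he),
      fun hS => (hSavoid e hS).1 he⟩
  · intro e he
    rw [Walk.edges_transfer] at he
    exact ⟨(edgeSet_mono sdiff_le) (q2'.edges_subset_edgeSet he),
      fun hS => (hSavoid e hS).2 he⟩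

end

variable {V : Type*}

lemma walk_cases {T : SimpleGraph V} {u v : V} (p : T.Walk u v) (hp : p.IsPath) (hne : u ≠ v) :
    T.Adj u v ∨ ∃ w1 w2, u ≠ w2 ∧ s(u,w1) ∈ p.edges ∧ s(w1,w2) ∈ p.edges := by
  cases p with
  | nil => exact absurd rfl hne
  | @cons u w1 v h q =>
    cases q with
    | nil => exact Or.inl h
    | @cons w1 w2 v h2 q2 =>
      right
      refine ⟨w1, w2, ?_, by simp [Walk.edges_cons], by simp [Walk.edges_cons]⟩
      have hnd := hp.support_nodup
      simp only [Walk.support_cons, List.nodup_cons, List.mem_cons] at hnd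
      intro heq
      exact hnd.1 (Or.inr (by rw [heq]; exact q2.start_mem_support))

section MainProof

variable {V : Type*}

theorem main_upper [Fintype V] (G : SimpleGraph V) (hG : G.Connected)
    (hlf1 : (bridgeGraph G).IsAcyclic) (hlf2 : ∀ v, ((bridgeGraph G).neighborSet v).ncard ≤ 2)
    (hsize : ∀ C : (bridgeGraph G).ConnectedComponent, C.supp.ncard ≤ 4)
    (huniq : ∀ C C' : (bridgeGraph G).ConnectedComponent,
      3 ≤ C.supp.ncard → 3 ≤ C'.supp.ncard → C = C') :
    ∃ c : Sym2 V → ℕ, (∀ e ∈ G.edgeSet, c e < 2) ∧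
      (∀ u v : V, u ≠ v → ∃ p : G.Walk u v, p.IsPath ∧
        ∃ col : ℕ, (p.edges.filter (fun e => c e = col)).length = 1) := by
  classical
  obtain ⟨T, hTG, hTc, hTac⟩ := exists_spanning_tree G hG
  obtain ⟨S, hSedge, hSsub, hShit⟩ := core_abstract hlf1 hlf2 hsize huniq
  have hBadj : ∀ {x y : V}, G.IsBridge s(x,y) → (bridgeGraph G).Adj x y := by
    intro x y h
    rw [bridgeGraph, fromEdgeSet_adj]
    exact ⟨h, fun hxy => by subst hxy; exact h (Reachable.refl _)⟩
  have hSbr : ∀ m ∈ S, G.IsBridge m := by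
    intro m hm
    have := hSedge m hm
    rw [bridgeGraph, edgeSet_fromEdgeSet] at this
    exact this.1
  refine ⟨fun e => if e ∈ T.edgeSet ∧ e ∉ S then 0 else 1, ?_, ?_⟩
  · intro e _
    dsimp only
    split <;> omega
  intro u v huv
  by_cases hadj : G.Adj u v
  · refine ⟨Walk.cons hadj Walk.nil, ?_, (if s(u,v) ∈ T.edgeSet ∧ s(u,v) ∉ S then 0 else 1), ?_⟩
    · simp [Walk.isPath_def, hadj.ne]
    · simp
  · obtain ⟨w0⟩ := hTc.preconnected u v
    have hp0 : w0.bypass.IsPath := w0.bypass_isPath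
    set p0 := w0.bypass with hp0def
    have hTedges : ∀ e ∈ p0.edges, e ∈ T.edgeSet := fun e he => p0.edges_subset_edgeSet he
    have hGsub : ∀ e ∈ p0.edges, e ∈ G.edgeSet := fun e he => (edgeSet_mono hTG) (hTedges e he)
    by_cases hS1 : ∃ m ∈ S, m ∈ p0.edges
    · obtain ⟨m, hmS, hmp⟩ := hS1
      refine ⟨p0.transfer G hGsub, hp0.transfer _, 1, ?_⟩
      rw [Walk.edges_transfer]
      refine filter_len_one (Walk.edges_nodup_of_support_nodup hp0.support_nodup) hmp _ ?_
      intro e he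
      simp only [decide_eq_true_eq]
      constructor
      · intro hc
        by_contra hne
        have heS : e ∉ S := fun heS => hne (hSsub e heS m hmS)
        rw [if_pos ⟨hTedges e he, heS⟩] at hc
        omega
      · rintro rfl
        rw [if_neg (fun hc => hc.2 hmS)]
    · by_cases hbr : ∃ e ∈ p0.edges, ¬ G.IsBridge e
      · push_neg at hS1
        obtain ⟨e, hep, henb⟩ := hbr
        induction e using Sym2.ind with
        | _ a b =>
          have hcase : ∃ (x1 y1 : V) (q1 : G.Walk u x1) (q2 : G.Walk y1 v) (h : G.Adj x1 y1),
              (q1.append (Walk.cons h q2)).IsPath ∧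
              (∀ e ∈ q1.edges, e ∈ T.edgeSet ∧ e ∉ S) ∧
              (∀ e ∈ q2.edges, e ∈ T.edgeSet ∧ e ∉ S) ∧ s(x1,y1) ∉ T.edgeSet := by
            rcases reach_ends_of_mem_edges p0 hep with hside | hside
            · exact case2_aux hTG hTc hTac S hSbr p0 hp0 hep henb hS1 hside
            · have hep' : s(b,a) ∈ p0.edges := by rwa [Sym2.eq_swap] at hep
              have henb' : ¬ G.IsBridge s(b,a) := by rwa [Sym2.eq_swap] at henb
              have hside' : (T \ fromEdgeSet {s(b,a)}).Reachable u b := by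
                rwa [Sym2.eq_swap] at hside
              obtain ⟨x1, y1, q1, q2, h, hpp, h1, h2, hch⟩ :=
                case2_aux hTG hTc hTac S hSbr p0 hp0 hep' henb' hS1 hside'
              exact ⟨x1, y1, q1, q2, h, hpp, h1, h2, hch⟩
          obtain ⟨x1, y1, q1, q2, h, hpp, h1, h2, hch⟩ := hcase
          refine ⟨q1.append (Walk.cons h q2), hpp, 1, ?_⟩
          rw [Walk.edges_append, Walk.edges_cons, List.filter_append, List.filter_cons]
          have hq1nil : q1.edges.filter (fun e =>
              decide ((if e ∈ T.edgeSet ∧ e ∉ S then 0 else 1) = 1)) = [] := by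
            rw [List.filter_eq_nil_iff]
            intro f hf
            simp only [decide_eq_true_eq]
            rw [if_pos ⟨(h1 f hf).1, (h1 f hf).2⟩]
            omega
          have hq2nil : q2.edges.filter (fun e =>
              decide ((if e ∈ T.edgeSet ∧ e ∉ S then 0 else 1) = 1)) = [] := by
            rw [List.filter_eq_nil_iff]
            intro f hf
            simp only [decide_eq_true_eq]
            rw [if_pos ⟨(h2 f hf).1, (h2 f hf).2⟩]
            omega
          have hchordc : decide ((if s(x1,y1) ∈ T.edgeSet ∧ s(x1,y1) ∉ S then 0 else 1) = 1)
              = true := by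
            simp only [decide_eq_true_eq]
            rw [if_neg (fun hc => hch hc.1)]
          rw [hq1nil, hq2nil, if_pos hchordc]
          simp
      · exfalso
        push_neg at hbr
        push_neg at hS1
        rcases walk_cases p0 hp0 huv with hadj' | ⟨w1, w2, hne2, he1, he2⟩
        · exact hadj (hTG hadj')
        · have hb1 : G.IsBridge s(u, w1) := hbr _ he1
          have hb2 : G.IsBridge s(w1, w2) := hbr _ he2
          rcases hShit u w1 w2 hne2 (hBadj hb1) (hBadj hb2) with hin | hin
          · exact hS1 _ hin he1
          · exact hS1 _ hin he2

end MainProof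

end Helpers

theorem stmt_10 {V : Type*} [Fintype V] (G : SimpleGraph V) (hG : G.Connected) (hnc : G ≠ ⊤)
    (hlf : IsLinearForest (bridgeGraph G))
    (hsize : ∀ C : (bridgeGraph G).ConnectedComponent, C.supp.ncard ≤ 4)
    (huniq : ∀ C C' : (bridgeGraph G).ConnectedComponent,
      3 ≤ C.supp.ncard → 3 ≤ C'.supp.ncard → C = C') :
    cfcNum G = 2 := by
  classical
  obtain ⟨hlf1, hlf2⟩ := hlf
  have hpair : ∃ u v : V, u ≠ v ∧ ¬ G.Adj u v := by
    by_contra hcon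
    push_neg at hcon
    apply hnc
    ext u v
    simp only [top_adj]
    exact ⟨Adj.ne, fun hne => hcon u v hne⟩
  obtain ⟨c₂, hc₂, hcf₂⟩ := main_upper G hG hlf1 hlf2 hsize huniq
  have hup : 2 ∈ {k | ∃ c : Sym2 V → ℕ, (∀ e ∈ G.edgeSet, c e < k) ∧ IsCFConnected G c} :=
    ⟨c₂, hc₂, hcf₂⟩
  have hlb : ∀ k ∈ {k | ∃ c : Sym2 V → ℕ, (∀ e ∈ G.edgeSet, c e < k) ∧ IsCFConnected G c},
      2 ≤ k := by
    rintro k ⟨c, hc, hcf⟩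
    by_contra hlt
    push_neg at hlt
    obtain ⟨u, v, huv, hnadj⟩ := hpair
    obtain ⟨p, hp, col, hfil⟩ := hcf u v huv
    interval_cases k
    · have hne0 : p.edges.filter (fun e => c e = col) ≠ [] := by
        intro hnil
        rw [hnil] at hfil
        simp at hfil
      obtain ⟨e, he⟩ := List.exists_mem_of_ne_nil _ hne0
      exact absurd (hc e (p.edges_subset_edgeSet (List.mem_of_mem_filter he)))
        (Nat.not_lt_zero _)
    · have hall : ∀ e ∈ p.edges, c e = 0 := fun e he =>
        Nat.lt_one_iff.mp (hc e (p.edges_subset_edgeSet he))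
      by_cases hcol : col = 0
      · subst hcol
        have hfe : p.edges.filter (fun e => c e = 0) = p.edges :=
          List.filter_eq_self.mpr (fun e he => by simp [hall e he])
        rw [hfe] at hfil
        obtain ⟨e, hL⟩ := List.length_eq_one_iff.mp hfil
        rcases walk_cases p hp huv with hadj' | ⟨w1, w2, hne2, he1, he2⟩
        · exact hnadj hadj'
        · have hadjuw1 : G.Adj u w1 := p.adj_of_mem_edges he1
          rw [hL] at he1 he2
          simp only [List.mem_singleton] at he1 he2
          have heq : s(u, w1) = s(w1, w2) := he1.trans he2.symm
          rcases Sym2.eq_iff.mp heq with ⟨h1, -⟩ | ⟨h1, -⟩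
          · exact hadjuw1.ne h1
          · exact hne2 h1
      · have hnil : p.edges.filter (fun e => c e = col) = [] := by
          rw [List.filter_eq_nil_iff]
          intro e he
          simp only [decide_eq_true_eq]
          rw [hall e he]
          exact fun h => hcol h.symm
        rw [hnil] at hfil
        simp at hfil
  unfold cfcNum
  exact le_antisymm (Nat.sInf_le hup) (le_csInf ⟨2, hup⟩ hlb)
end

section
/- For every t ≥ 3, let S be the graph on n = 5t vertices obtained from a path v₀v₁v₂v₃v₄v₅ by attaching a complete graph K_t at each of v₀, v₁, v₄, v₅ (identifying one vertex of each K_t with the path vertex) and gluing one more K_t along the edge v₂v₃. Then δ(S) = (n−5)/5, the cut edges of S induce a linear forest with two components of order 3, and cfc(S) ≥ 3. -/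
open SimpleGraph


namespace CFC11

abbrev Vt (s : ℕ) := Fin 5 × Fin (s+3)

variable (s : ℕ)

def x0 : Vt s := (0, 0)
def x1 : Vt s := (1, 0)
def x2 : Vt s := (2, 0)
def x3 : Vt s := (2, 1)
def x4 : Vt s := (3, 0)
def x5 : Vt s := (4, 0)

lemma ne01F : (0 : Fin (s+3)) ≠ 1 := by
  simp [Fin.ext_iff]

lemma x0_ne_x1 : x0 s ≠ x1 s := by
  intro h; simp only [x0, x1] at h
  have h5 : (0 : Fin 5) = 1 := congrArg Prod.fst h
  exact absurd h5 (by decide)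
lemma x0_ne_x2 : x0 s ≠ x2 s := by
  intro h; simp only [x0, x2] at h
  have h5 : (0 : Fin 5) = 2 := congrArg Prod.fst h
  exact absurd h5 (by decide)
lemma x0_ne_x3 : x0 s ≠ x3 s := by
  intro h; simp only [x0, x3] at h
  have h5 : (0 : Fin 5) = 2 := congrArg Prod.fst h
  exact absurd h5 (by decide)
lemma x0_ne_x4 : x0 s ≠ x4 s := by
  intro h; simp only [x0, x4] at h
  have h5 : (0 : Fin 5) = 3 := congrArg Prod.fst h
  exact absurd h5 (by decide)
lemma x0_ne_x5 : x0 s ≠ x5 s := by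
  intro h; simp only [x0, x5] at h
  have h5 : (0 : Fin 5) = 4 := congrArg Prod.fst h
  exact absurd h5 (by decide)
lemma x1_ne_x2 : x1 s ≠ x2 s := by
  intro h; simp only [x1, x2] at h
  have h5 : (1 : Fin 5) = 2 := congrArg Prod.fst h
  exact absurd h5 (by decide)
lemma x1_ne_x3 : x1 s ≠ x3 s := by
  intro h; simp only [x1, x3] at h
  have h5 : (1 : Fin 5) = 2 := congrArg Prod.fst h
  exact absurd h5 (by decide)
lemma x1_ne_x4 : x1 s ≠ x4 s := by
  intro h; simp only [x1, x4] at h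
  have h5 : (1 : Fin 5) = 3 := congrArg Prod.fst h
  exact absurd h5 (by decide)
lemma x1_ne_x5 : x1 s ≠ x5 s := by
  intro h; simp only [x1, x5] at h
  have h5 : (1 : Fin 5) = 4 := congrArg Prod.fst h
  exact absurd h5 (by decide)
lemma x2_ne_x3 : x2 s ≠ x3 s := by
  intro h; simp only [x2, x3] at h; exact ne01F s (congrArg Prod.snd h)
lemma x2_ne_x4 : x2 s ≠ x4 s := by
  intro h; simp only [x2, x4] at h
  have h5 : (2 : Fin 5) = 3 := congrArg Prod.fst h
  exact absurd h5 (by decide)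
lemma x2_ne_x5 : x2 s ≠ x5 s := by
  intro h; simp only [x2, x5] at h
  have h5 : (2 : Fin 5) = 4 := congrArg Prod.fst h
  exact absurd h5 (by decide)
lemma x3_ne_x4 : x3 s ≠ x4 s := by
  intro h; simp only [x3, x4] at h
  have h5 : (2 : Fin 5) = 3 := congrArg Prod.fst h
  exact absurd h5 (by decide)
lemma x3_ne_x5 : x3 s ≠ x5 s := by
  intro h; simp only [x3, x5] at h
  have h5 : (2 : Fin 5) = 4 := congrArg Prod.fst h
  exact absurd h5 (by decide)
lemma x4_ne_x5 : x4 s ≠ x5 s := by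
  intro h; simp only [x4, x5] at h
  have h5 : (3 : Fin 5) = 4 := congrArg Prod.fst h
  exact absurd h5 (by decide)

/-- The graph S. -/
def Gr : SimpleGraph (Vt s) where
  Adj u v := (u.1 = v.1 ∧ u ≠ v) ∨
    (u = x0 s ∧ v = x1 s) ∨ (u = x1 s ∧ v = x0 s) ∨
    (u = x1 s ∧ v = x2 s) ∨ (u = x2 s ∧ v = x1 s) ∨
    (u = x3 s ∧ v = x4 s) ∨ (u = x4 s ∧ v = x3 s) ∨
    (u = x4 s ∧ v = x5 s) ∨ (u = x5 s ∧ v = x4 s)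
  symm := by
    constructor
    rintro u v (⟨h1, h2⟩ | ⟨rfl,rfl⟩ | ⟨rfl,rfl⟩ | ⟨rfl,rfl⟩ | ⟨rfl,rfl⟩ |
      ⟨rfl,rfl⟩ | ⟨rfl,rfl⟩ | ⟨rfl,rfl⟩ | ⟨rfl,rfl⟩)
    · exact Or.inl ⟨h1.symm, fun h => h2 h.symm⟩
    · exact Or.inr (Or.inr (Or.inl ⟨rfl, rfl⟩))
    · exact Or.inr (Or.inl ⟨rfl, rfl⟩)
    · exact Or.inr (Or.inr (Or.inr (Or.inr (Or.inl ⟨rfl, rfl⟩))))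
    · exact Or.inr (Or.inr (Or.inr (Or.inl ⟨rfl, rfl⟩)))
    · exact Or.inr (Or.inr (Or.inr (Or.inr (Or.inr (Or.inr (Or.inl ⟨rfl, rfl⟩))))))
    · exact Or.inr (Or.inr (Or.inr (Or.inr (Or.inr (Or.inl ⟨rfl, rfl⟩)))))
    · exact Or.inr (Or.inr (Or.inr (Or.inr (Or.inr (Or.inr (Or.inr (Or.inr ⟨rfl, rfl⟩)))))))
    · exact Or.inr (Or.inr (Or.inr (Or.inr (Or.inr (Or.inr (Or.inr (Or.inl ⟨rfl, rfl⟩)))))))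
  loopless := by
    constructor
    rintro u (⟨h1, h2⟩ | ⟨rfl,h⟩ | ⟨rfl,h⟩ | ⟨rfl,h⟩ | ⟨rfl,h⟩ |
      ⟨rfl,h⟩ | ⟨rfl,h⟩ | ⟨rfl,h⟩ | ⟨rfl,h⟩)
    · exact h2 rfl
    · exact x0_ne_x1 s h
    · exact x0_ne_x1 s h.symm
    · exact x1_ne_x2 s h
    · exact x1_ne_x2 s h.symm
    · exact x3_ne_x4 s h
    · exact x3_ne_x4 s h.symm
    · exact x4_ne_x5 s h
    · exact x4_ne_x5 s h.symm

lemma gr_adj {u v : Vt s} : (Gr s).Adj u v ↔ (u.1 = v.1 ∧ u ≠ v) ∨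
    (u = x0 s ∧ v = x1 s) ∨ (u = x1 s ∧ v = x0 s) ∨
    (u = x1 s ∧ v = x2 s) ∨ (u = x2 s ∧ v = x1 s) ∨
    (u = x3 s ∧ v = x4 s) ∨ (u = x4 s ∧ v = x3 s) ∨
    (u = x4 s ∧ v = x5 s) ∨ (u = x5 s ∧ v = x4 s) := Iff.rfl


def bsrc : ℕ → Vt s
  | 0 => x0 s | 1 => x1 s | 2 => x3 s | _ => x4 s

def btgt : ℕ → Vt s
  | 0 => x1 s | 1 => x2 s | 2 => x4 s | _ => x5 s

lemma v0f : (x0 s).1.val = 0 := rfl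
lemma v1f : (x1 s).1.val = 1 := rfl
lemma v2f : (x2 s).1.val = 2 := rfl
lemma v3f : (x3 s).1.val = 2 := rfl
lemma v4f : (x4 s).1.val = 3 := rfl
lemma v5f : (x5 s).1.val = 4 := rfl

lemma adj_cross {n : ℕ} (hn : n ≤ 3) {u v : Vt s} (h : (Gr s).Adj u v)
    (hu : u.1.val ≤ n) (hv : n < v.1.val) : u = bsrc s n ∧ v = btgt s n := by
  rcases (gr_adj s).1 h with ⟨h1, h2⟩ | ⟨rfl,rfl⟩ | ⟨rfl,rfl⟩ | ⟨rfl,rfl⟩ | ⟨rfl,rfl⟩ |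
      ⟨rfl,rfl⟩ | ⟨rfl,rfl⟩ | ⟨rfl,rfl⟩ | ⟨rfl,rfl⟩
  · rw [h1] at hu; omega
  · rw [v0f] at hu; rw [v1f] at hv
    have : n = 0 := by omega
    subst this; exact ⟨rfl, rfl⟩
  · rw [v1f] at hu; rw [v0f] at hv; omega
  · rw [v1f] at hu; rw [v2f] at hv
    have : n = 1 := by omega
    subst this; exact ⟨rfl, rfl⟩
  · rw [v2f] at hu; rw [v1f] at hv; omega
  · rw [v3f] at hu; rw [v4f] at hv
    have : n = 2 := by omega
    subst this; exact ⟨rfl, rfl⟩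
  · rw [v4f] at hu; rw [v3f] at hv; omega
  · rw [v4f] at hu; rw [v5f] at hv
    have : n = 3 := by omega
    interval_cases n
    exact ⟨rfl, rfl⟩
  · rw [v5f] at hu; rw [v4f] at hv; omega

lemma walk_cross' {n : ℕ} (hn : n ≤ 3) {u v : Vt s} (p : (Gr s).Walk u v)
    (h2 : n < v.1.val) : u.1.val ≤ n →
    s(bsrc s n, btgt s n) ∈ p.edges ∧ bsrc s n ∈ p.support ∧ btgt s n ∈ p.support := by
  induction p with
  | nil => intro h1; omega
  | @cons a b c h q ih =>
    intro h1
    by_cases hb : b.1.val ≤ n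
    · obtain ⟨he, hs, ht⟩ := ih h2 hb
      exact ⟨by simp [he], by simp [hs], by simp [ht]⟩
    · push_neg at hb
      obtain ⟨rfl, rfl⟩ := adj_cross s hn h h1 hb
      exact ⟨by simp, by simp, by simp [Walk.start_mem_support]⟩

lemma walk_cross {n : ℕ} (hn : n ≤ 3) {u v : Vt s} (p : (Gr s).Walk u v)
    (h1 : u.1.val ≤ n) (h2 : n < v.1.val) :
    s(bsrc s n, btgt s n) ∈ p.edges ∧ bsrc s n ∈ p.support ∧ btgt s n ∈ p.support :=
  walk_cross' s hn p h2 h1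


lemma adj_from_x0 {w : Vt s} (h : (Gr s).Adj (x0 s) w) :
    (w.1 = (0 : Fin 5) ∧ w ≠ x0 s) ∨ w = x1 s := by
  rcases (gr_adj s).1 h with ⟨h1, h2⟩ | ⟨h1,rfl⟩ | ⟨h1,h2⟩ | ⟨h1,h2⟩ | ⟨h1,h2⟩ |
      ⟨h1,h2⟩ | ⟨h1,h2⟩ | ⟨h1,h2⟩ | ⟨h1,h2⟩
  · exact Or.inl ⟨h1.symm, fun hw => h2 hw.symm⟩
  · exact Or.inr rfl
  · exact absurd h1 (x0_ne_x1 s)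
  · exact absurd h1 (x0_ne_x1 s)
  · exact absurd h1 (x0_ne_x2 s)
  · exact absurd h1 (x0_ne_x3 s)
  · exact absurd h1 (x0_ne_x4 s)
  · exact absurd h1 (x0_ne_x4 s)
  · exact absurd h1 (x0_ne_x5 s)

lemma adj_from_x1 {w : Vt s} (h : (Gr s).Adj (x1 s) w) :
    (w.1 = (1 : Fin 5) ∧ w ≠ x1 s) ∨ w = x0 s ∨ w = x2 s := by
  rcases (gr_adj s).1 h with ⟨h1, h2⟩ | ⟨h1,h2⟩ | ⟨h1,rfl⟩ | ⟨h1,rfl⟩ | ⟨h1,h2⟩ |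
      ⟨h1,h2⟩ | ⟨h1,h2⟩ | ⟨h1,h2⟩ | ⟨h1,h2⟩
  · exact Or.inl ⟨h1.symm, fun hw => h2 hw.symm⟩
  · exact absurd h1.symm (x0_ne_x1 s)
  · exact Or.inr (Or.inl rfl)
  · exact Or.inr (Or.inr rfl)
  · exact absurd h1 (x1_ne_x2 s)
  · exact absurd h1 (x1_ne_x3 s)
  · exact absurd h1 (x1_ne_x4 s)
  · exact absurd h1 (x1_ne_x4 s)
  · exact absurd h1 (x1_ne_x5 s)

lemma adj_from_x3 {w : Vt s} (h : (Gr s).Adj (x3 s) w) :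
    (w.1 = (2 : Fin 5) ∧ w ≠ x3 s) ∨ w = x4 s := by
  rcases (gr_adj s).1 h with ⟨h1, h2⟩ | ⟨h1,h2⟩ | ⟨h1,h2⟩ | ⟨h1,h2⟩ | ⟨h1,h2⟩ |
      ⟨h1,rfl⟩ | ⟨h1,h2⟩ | ⟨h1,h2⟩ | ⟨h1,h2⟩
  · exact Or.inl ⟨h1.symm, fun hw => h2 hw.symm⟩
  · exact absurd h1.symm (x0_ne_x3 s)
  · exact absurd h1.symm (x1_ne_x3 s)
  · exact absurd h1.symm (x1_ne_x3 s)
  · exact absurd h1.symm (x2_ne_x3 s)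
  · exact Or.inr rfl
  · exact absurd h1 (x3_ne_x4 s)
  · exact absurd h1 (x3_ne_x4 s)
  · exact absurd h1 (x3_ne_x5 s)

lemma adj_from_x4 {w : Vt s} (h : (Gr s).Adj (x4 s) w) :
    (w.1 = (3 : Fin 5) ∧ w ≠ x4 s) ∨ w = x3 s ∨ w = x5 s := by
  rcases (gr_adj s).1 h with ⟨h1, h2⟩ | ⟨h1,h2⟩ | ⟨h1,h2⟩ | ⟨h1,h2⟩ | ⟨h1,h2⟩ |
      ⟨h1,h2⟩ | ⟨h1,rfl⟩ | ⟨h1,rfl⟩ | ⟨h1,h2⟩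
  · exact Or.inl ⟨h1.symm, fun hw => h2 hw.symm⟩
  · exact absurd h1.symm (x0_ne_x4 s)
  · exact absurd h1.symm (x1_ne_x4 s)
  · exact absurd h1.symm (x1_ne_x4 s)
  · exact absurd h1.symm (x2_ne_x4 s)
  · exact absurd h1.symm (x3_ne_x4 s)
  · exact Or.inr (Or.inl rfl)
  · exact Or.inr (Or.inr rfl)
  · exact absurd h1 (x4_ne_x5 s)

/-- Uniqueness of the path from x0 to x2. -/
lemma path02 {u : Vt s} (p : (Gr s).Walk u (x2 s)) (hp : p.IsPath) (hu : u = x0 s) :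
    p.edges = [s(x0 s, x1 s), s(x1 s, x2 s)] := by
  cases p with
  | nil => exact absurd hu.symm (x0_ne_x2 s)
  | @cons _ b _ h q =>
    subst hu
    rw [Walk.cons_isPath_iff] at hp
    rcases adj_from_x0 s h with ⟨hb1, hb2⟩ | rfl
    · have hc := walk_cross s (n := 0) (by norm_num) q (by rw [hb1]; decide) (by rw [v2f]; norm_num)
      exact absurd hc.2.1 hp.2
    · cases q with
      | @cons _ b2 _ h2 r =>
        rw [Walk.cons_isPath_iff] at hp
        rcases adj_from_x1 s h2 with ⟨hb1, hb2⟩ | rfl | rfl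
        · have hc := walk_cross s (n := 1) (by norm_num) r (by rw [hb1]; decide) (by rw [v2f]; norm_num)
          exact absurd hc.2.1 hp.1.2
        · exact absurd (Walk.start_mem_support r) (by simpa using hp.2)
        · have : r = Walk.nil := Walk.isPath_iff_eq_nil.1 hp.1.1
          subst this
          rfl

/-- Uniqueness of the path from x3 to x5. -/
lemma path35 {u : Vt s} (p : (Gr s).Walk u (x5 s)) (hp : p.IsPath) (hu : u = x3 s) :
    p.edges = [s(x3 s, x4 s), s(x4 s, x5 s)] := by
  cases p with
  | nil => exact absurd hu.symm (x3_ne_x5 s)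
  | @cons _ b _ h q =>
    subst hu
    rw [Walk.cons_isPath_iff] at hp
    rcases adj_from_x3 s h with ⟨hb1, hb2⟩ | rfl
    · have hc := walk_cross s (n := 2) (by norm_num) q (by rw [hb1]; decide) (by rw [v5f]; norm_num)
      exact absurd hc.2.1 hp.2
    · cases q with
      | @cons _ b2 _ h2 r =>
        rw [Walk.cons_isPath_iff] at hp
        rcases adj_from_x4 s h2 with ⟨hb1, hb2⟩ | rfl | rfl
        · have hc := walk_cross s (n := 3) (by norm_num) r (by rw [hb1]; decide) (by rw [v5f]; norm_num)
          exact absurd hc.2.1 hp.1.2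
        · exact absurd (Walk.start_mem_support r) (by simpa using hp.2)
        · have : r = Walk.nil := Walk.isPath_iff_eq_nil.1 hp.1.1
          subst this
          rfl


lemma block_reach (i : Fin 5) (j : Fin (s+3)) : (Gr s).Reachable (i, j) (i, 0) := by
  by_cases hj : j = 0
  · subst hj; rfl
  · exact Adj.reachable (Or.inl ⟨rfl, fun h => hj (congrArg Prod.snd h)⟩)

lemma adj01 : (Gr s).Adj (x0 s) (x1 s) := Or.inr (Or.inl ⟨rfl, rfl⟩)
lemma adj12 : (Gr s).Adj (x1 s) (x2 s) := Or.inr (Or.inr (Or.inr (Or.inl ⟨rfl, rfl⟩)))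
lemma adj23 : (Gr s).Adj (x2 s) (x3 s) := Or.inl ⟨rfl, x2_ne_x3 s⟩
lemma adj34 : (Gr s).Adj (x3 s) (x4 s) :=
  Or.inr (Or.inr (Or.inr (Or.inr (Or.inr (Or.inl ⟨rfl, rfl⟩)))))
lemma adj45 : (Gr s).Adj (x4 s) (x5 s) :=
  Or.inr (Or.inr (Or.inr (Or.inr (Or.inr (Or.inr (Or.inr (Or.inl ⟨rfl, rfl⟩)))))))

lemma spine_reach (i : Fin 5) : (Gr s).Reachable (i, 0) (x0 s) := by
  have r01 := (adj01 s).reachable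
  have r12 := (adj12 s).reachable
  have r23 := (adj23 s).reachable
  have r34 := (adj34 s).reachable
  have r45 := (adj45 s).reachable
  fin_cases i
  · rfl
  · exact r01.symm
  · exact r12.symm.trans r01.symm
  · exact r34.symm.trans ((r23.symm).trans (r12.symm.trans r01.symm))
  · exact r45.symm.trans (r34.symm.trans ((r23.symm).trans (r12.symm.trans r01.symm)))


lemma gr_connected : (Gr s).Connected := by
  rw [connected_iff]
  refine ⟨fun u v => ?_, ⟨x0 s⟩⟩
  have hu : (Gr s).Reachable u (x0 s) := by
    have h1 := block_reach s u.1 u.2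
    rw [Prod.mk.eta] at h1
    exact h1.trans (spine_reach s u.1)
  have hv : (Gr s).Reachable v (x0 s) := by
    have h1 := block_reach s v.1 v.2
    rw [Prod.mk.eta] at h1
    exact h1.trans (spine_reach s v.1)
  exact hu.trans hv.symm

/-- The set of same-block partners of `v`. -/
def blk (v : Vt s) : Set (Vt s) := {w | w.1 = v.1 ∧ w ≠ v}

lemma blk_ncard (v : Vt s) : (blk s v).ncard = s + 2 := by
  have himg : blk s v = Prod.mk v.1 '' {j | j ≠ v.2} := by
    ext ⟨a, b⟩
    simp only [blk, Set.mem_setOf_eq, Set.mem_image, Prod.ext_iff, ne_eq]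
    constructor
    · rintro ⟨rfl, h2⟩
      exact ⟨b, fun hb => h2 ⟨rfl, hb⟩, rfl, rfl⟩
    · rintro ⟨j, hj, rfl, rfl⟩
      exact ⟨rfl, fun h => hj h.2⟩
  rw [himg, Set.ncard_image_of_injective _ (fun a b h => (Prod.ext_iff.1 h).2)]
  have : {j : Fin (s+3) | j ≠ v.2} = Set.univ \ {v.2} := by
    ext j; simp
  rw [this, Set.ncard_diff_singleton_of_mem (Set.mem_univ _), Set.ncard_univ]
  simp [Nat.card_eq_fintype_card]

lemma blk_subset_nbhd (v : Vt s) : blk s v ⊆ (Gr s).neighborSet v := by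
  rintro w ⟨h1, h2⟩
  exact Or.inl ⟨h1.symm, fun h => h2 h.symm⟩

lemma vdeg_lower (v : Vt s) : s + 2 ≤ ((Gr s).neighborSet v).ncard := by
  rw [← blk_ncard s v]
  exact Set.ncard_le_ncard (blk_subset_nbhd s v) (Set.toFinite _)

/-- The vertex (0,1) has degree exactly s+2. -/
lemma vdeg_exact : ((Gr s).neighborSet ((0 : Fin 5), (1 : Fin (s+3)))).ncard = s + 2 := by
  set u : Vt s := ((0 : Fin 5), (1 : Fin (s+3))) with hu
  have h1 : u ≠ x1 s := by
    intro h; simp only [hu, x1] at h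
    have h5 : (0 : Fin 5) = 1 := congrArg Prod.fst h
    exact absurd h5 (by decide)
  have h0 : u ≠ x0 s := by
    intro h; simp only [hu, x0] at h
    exact ne01F s (congrArg Prod.snd h).symm
  have h2 : u ≠ x2 s := by
    intro h; simp only [hu, x2] at h
    have h5 : (0 : Fin 5) = 2 := congrArg Prod.fst h
    exact absurd h5 (by decide)
  have h3 : u ≠ x3 s := by
    intro h; simp only [hu, x3] at h
    have h5 : (0 : Fin 5) = 2 := congrArg Prod.fst h
    exact absurd h5 (by decide)
  have h4 : u ≠ x4 s := by
    intro h; simp only [hu, x4] at h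
    have h5 : (0 : Fin 5) = 3 := congrArg Prod.fst h
    exact absurd h5 (by decide)
  have h5 : u ≠ x5 s := by
    intro h; simp only [hu, x5] at h
    have h5 : (0 : Fin 5) = 4 := congrArg Prod.fst h
    exact absurd h5 (by decide)
  have heq : (Gr s).neighborSet u = blk s u := by
    apply Set.Subset.antisymm
    · intro w hw
      rcases (gr_adj s).1 hw with ⟨ha, hb⟩ | ⟨ha,hb⟩ | ⟨ha,hb⟩ | ⟨ha,hb⟩ | ⟨ha,hb⟩ |
          ⟨ha,hb⟩ | ⟨ha,hb⟩ | ⟨ha,hb⟩ | ⟨ha,hb⟩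
      · exact ⟨ha.symm, fun h => hb h.symm⟩
      · exact absurd ha h0
      · exact absurd ha h1
      · exact absurd ha h1
      · exact absurd ha h2
      · exact absurd ha h3
      · exact absurd ha h4
      · exact absurd ha h4
      · exact absurd ha h5
    · exact blk_subset_nbhd s u
  rw [heq, blk_ncard]


lemma reach_inv {W : Type*} {G : SimpleGraph W} (P : W → Prop)
    (h : ∀ x y, G.Adj x y → (P x ↔ P y)) {u v : W} (hr : G.Reachable u v) : P u ↔ P v := by
  obtain ⟨p⟩ := hr
  induction p with
  | nil => exact Iff.rfl
  | cons hadj q ih => exact (h _ _ hadj).trans ih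

lemma del_adj {e : Sym2 (Vt s)} {x y : Vt s}
    (h : ((Gr s) \ fromEdgeSet {e}).Adj x y) : (Gr s).Adj x y ∧ s(x, y) ≠ e := by
  rw [sdiff_adj, fromEdgeSet_adj] at h
  exact ⟨h.1, fun he => h.2 ⟨by simpa using he, h.1.ne⟩⟩

lemma sym2_ne {a b c d : Vt s} (h1 : a ≠ c ∨ b ≠ d) (h2 : a ≠ d ∨ b ≠ c) :
    s(a, b) ≠ s(c, d) := by
  intro h
  rw [Sym2.eq_iff] at h
  rcases h with ⟨rfl, rfl⟩ | ⟨rfl, rfl⟩ <;> tauto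

lemma bridge_e1 : (Gr s).IsBridge s(x0 s, x1 s) := by
  rw [isBridge_iff]
  refine fun hr => ?_
  have := reach_inv (fun x : Vt s => x.1.val ≤ 0) (fun x y hxy => ?_) hr
  · simp only [v0f, v1f] at this; omega
  obtain ⟨ha, hne⟩ := del_adj s hxy
  rcases (gr_adj s).1 ha with ⟨h1, h2⟩ | ⟨rfl,rfl⟩ | ⟨rfl,rfl⟩ | ⟨rfl,rfl⟩ | ⟨rfl,rfl⟩ |
      ⟨rfl,rfl⟩ | ⟨rfl,rfl⟩ | ⟨rfl,rfl⟩ | ⟨rfl,rfl⟩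
  · simp only [h1]
  · exact absurd rfl hne
  · exact absurd (Sym2.eq_swap) hne
  · simp only [v0f, v1f, v2f, v3f, v4f, v5f]; omega
  · simp only [v0f, v1f, v2f, v3f, v4f, v5f]; omega
  · simp only [v0f, v1f, v2f, v3f, v4f, v5f]; omega
  · simp only [v0f, v1f, v2f, v3f, v4f, v5f]; omega
  · simp only [v0f, v1f, v2f, v3f, v4f, v5f]; omega
  · simp only [v0f, v1f, v2f, v3f, v4f, v5f]; omega

lemma bridge_e2 : (Gr s).IsBridge s(x1 s, x2 s) := by
  rw [isBridge_iff]
  refine fun hr => ?_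
  have := reach_inv (fun x : Vt s => x.1.val ≤ 1) (fun x y hxy => ?_) hr
  · simp only [v1f, v2f] at this; omega
  obtain ⟨ha, hne⟩ := del_adj s hxy
  rcases (gr_adj s).1 ha with ⟨h1, h2⟩ | ⟨rfl,rfl⟩ | ⟨rfl,rfl⟩ | ⟨rfl,rfl⟩ | ⟨rfl,rfl⟩ |
      ⟨rfl,rfl⟩ | ⟨rfl,rfl⟩ | ⟨rfl,rfl⟩ | ⟨rfl,rfl⟩
  · simp only [h1]
  · simp only [v0f, v1f, v2f, v3f, v4f, v5f]; omega
  · simp only [v0f, v1f, v2f, v3f, v4f, v5f]; omega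
  · exact absurd rfl hne
  · exact absurd (Sym2.eq_swap) hne
  · simp only [v0f, v1f, v2f, v3f, v4f, v5f]; omega
  · simp only [v0f, v1f, v2f, v3f, v4f, v5f]; omega
  · simp only [v0f, v1f, v2f, v3f, v4f, v5f]; omega
  · simp only [v0f, v1f, v2f, v3f, v4f, v5f]; omega

lemma bridge_e3 : (Gr s).IsBridge s(x3 s, x4 s) := by
  rw [isBridge_iff]
  refine fun hr => ?_
  have := reach_inv (fun x : Vt s => x.1.val ≤ 2) (fun x y hxy => ?_) hr
  · simp only [v3f, v4f] at this; omega
  obtain ⟨ha, hne⟩ := del_adj s hxy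
  rcases (gr_adj s).1 ha with ⟨h1, h2⟩ | ⟨rfl,rfl⟩ | ⟨rfl,rfl⟩ | ⟨rfl,rfl⟩ | ⟨rfl,rfl⟩ |
      ⟨rfl,rfl⟩ | ⟨rfl,rfl⟩ | ⟨rfl,rfl⟩ | ⟨rfl,rfl⟩
  · simp only [h1]
  · simp only [v0f, v1f, v2f, v3f, v4f, v5f]; omega
  · simp only [v0f, v1f, v2f, v3f, v4f, v5f]; omega
  · simp only [v0f, v1f, v2f, v3f, v4f, v5f]; omega
  · simp only [v0f, v1f, v2f, v3f, v4f, v5f]; omega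
  · exact absurd rfl hne
  · exact absurd (Sym2.eq_swap) hne
  · simp only [v0f, v1f, v2f, v3f, v4f, v5f]; omega
  · simp only [v0f, v1f, v2f, v3f, v4f, v5f]; omega

lemma bridge_e4 : (Gr s).IsBridge s(x4 s, x5 s) := by
  rw [isBridge_iff]
  refine fun hr => ?_
  have := reach_inv (fun x : Vt s => x.1.val ≤ 3) (fun x y hxy => ?_) hr
  · simp only [v4f, v5f] at this; omega
  obtain ⟨ha, hne⟩ := del_adj s hxy
  rcases (gr_adj s).1 ha with ⟨h1, h2⟩ | ⟨rfl,rfl⟩ | ⟨rfl,rfl⟩ | ⟨rfl,rfl⟩ | ⟨rfl,rfl⟩ |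
      ⟨rfl,rfl⟩ | ⟨rfl,rfl⟩ | ⟨rfl,rfl⟩ | ⟨rfl,rfl⟩
  · simp only [h1]
  · simp only [v0f, v1f, v2f, v3f, v4f, v5f]; omega
  · simp only [v0f, v1f, v2f, v3f, v4f, v5f]; omega
  · simp only [v0f, v1f, v2f, v3f, v4f, v5f]; omega
  · simp only [v0f, v1f, v2f, v3f, v4f, v5f]; omega
  · simp only [v0f, v1f, v2f, v3f, v4f, v5f]; omega
  · simp only [v0f, v1f, v2f, v3f, v4f, v5f]; omega
  · exact absurd rfl hne
  · exact absurd (Sym2.eq_swap) hne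

lemma block_not_bridge {u v : Vt s} (h1 : u.1 = v.1) (h2 : u ≠ v) :
    ¬ (Gr s).IsBridge s(u, v) := by
  rw [isBridge_iff]
  intro hnr
  have hk : ∃ k : Fin (s+3), k ≠ u.2 ∧ k ≠ v.2 := by
    by_contra hc
    push_neg at hc
    have hsub : (Finset.univ : Finset (Fin (s+3))) ⊆ {u.2, v.2} := by
      intro k _
      by_cases hku : k = u.2
      · simp [hku]
      · simp [hc k hku]
    have hcard := Finset.card_le_card hsub
    have : s + 3 ≤ 2 := by
      calc s + 3 = (Finset.univ : Finset (Fin (s+3))).card := by simp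
      _ ≤ ({u.2, v.2} : Finset (Fin (s+3))).card := hcard
      _ ≤ 2 := Finset.card_insert_le _ _ |>.trans (by simp)
    omega
  obtain ⟨k, hk1, hk2⟩ := hk
  set w : Vt s := (u.1, k) with hw
  have hadj1 : ((Gr s) \ fromEdgeSet {s(u, v)}).Adj u w := by
    rw [sdiff_adj, fromEdgeSet_adj]
    constructor
    · exact Or.inl ⟨rfl, fun h => hk1 (congrArg Prod.snd h).symm⟩
    · rintro ⟨he, -⟩
      rw [Set.mem_singleton_iff, Sym2.eq_iff] at he
      rcases he with ⟨-, h⟩ | ⟨h, -⟩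
      · exact hk2 (congrArg Prod.snd h)
      · exact h2 h
  have hadj2 : ((Gr s) \ fromEdgeSet {s(u, v)}).Adj w v := by
    rw [sdiff_adj, fromEdgeSet_adj]
    constructor
    · refine Or.inl ⟨h1, fun h => hk2 (congrArg Prod.snd h)⟩
    · rintro ⟨he, -⟩
      rw [Set.mem_singleton_iff, Sym2.eq_iff] at he
      rcases he with ⟨h, -⟩ | ⟨-, h⟩
      · exact hk1 (congrArg Prod.snd h)
      · exact h2 h.symm
  exact hnr (hadj1.reachable.trans hadj2.reachable)

lemma bridge_set_eq : {e | (Gr s).IsBridge e} =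
    ({s(x0 s, x1 s), s(x1 s, x2 s), s(x3 s, x4 s), s(x4 s, x5 s)} : Set (Sym2 (Vt s))) := by
  ext e
  induction e with
  | h u v =>
    simp only [Set.mem_setOf_eq, Set.mem_insert_iff, Set.mem_singleton_iff]
    constructor
    · intro hb
      have hadj : (Gr s).Adj u v :=
        (IsBridge.reachable_iff_adj (G := Gr s) hb).1 ((gr_connected s).preconnected u v)
      rcases (gr_adj s).1 hadj with ⟨h1, h2⟩ | ⟨rfl,rfl⟩ | ⟨rfl,rfl⟩ | ⟨rfl,rfl⟩ | ⟨rfl,rfl⟩ |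
          ⟨rfl,rfl⟩ | ⟨rfl,rfl⟩ | ⟨rfl,rfl⟩ | ⟨rfl,rfl⟩
      · exact absurd hb (block_not_bridge s h1 h2)
      · exact Or.inl rfl
      · exact Or.inl Sym2.eq_swap
      · exact Or.inr (Or.inl rfl)
      · exact Or.inr (Or.inl Sym2.eq_swap)
      · exact Or.inr (Or.inr (Or.inl rfl))
      · exact Or.inr (Or.inr (Or.inl Sym2.eq_swap))
      · exact Or.inr (Or.inr (Or.inr rfl))
      · exact Or.inr (Or.inr (Or.inr Sym2.eq_swap))
    · rintro (h | h | h | h) <;> rw [h]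
      · exact bridge_e1 s
      · exact bridge_e2 s
      · exact bridge_e3 s
      · exact bridge_e4 s


lemma del_adj' {W : Type*} {G : SimpleGraph W} {e : Sym2 W} {x y : W}
    (h : (G \ fromEdgeSet {e}).Adj x y) : G.Adj x y ∧ s(x, y) ≠ e := by
  rw [sdiff_adj, fromEdgeSet_adj] at h
  exact ⟨h.1, fun he => h.2 ⟨by simpa using he, h.1.ne⟩⟩

lemma bg_adj {u v : Vt s} : (bridgeGraph (Gr s)).Adj u v ↔
    ((u = x0 s ∧ v = x1 s) ∨ (u = x1 s ∧ v = x0 s) ∨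
    (u = x1 s ∧ v = x2 s) ∨ (u = x2 s ∧ v = x1 s) ∨
    (u = x3 s ∧ v = x4 s) ∨ (u = x4 s ∧ v = x3 s) ∨
    (u = x4 s ∧ v = x5 s) ∨ (u = x5 s ∧ v = x4 s)) := by
  rw [bridgeGraph, fromEdgeSet_adj, bridge_set_eq]
  constructor
  · rintro ⟨hm, hne⟩
    simp only [Set.mem_insert_iff, Set.mem_singleton_iff, Sym2.eq_iff] at hm
    rcases hm with (h|h)|((h|h)|((h|h)|(h|h)))
    exacts [Or.inl h, Or.inr (Or.inl h), Or.inr (Or.inr (Or.inl h)),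
      Or.inr (Or.inr (Or.inr (Or.inl h))), Or.inr (Or.inr (Or.inr (Or.inr (Or.inl h)))),
      Or.inr (Or.inr (Or.inr (Or.inr (Or.inr (Or.inl h))))),
      Or.inr (Or.inr (Or.inr (Or.inr (Or.inr (Or.inr (Or.inl h)))))),
      Or.inr (Or.inr (Or.inr (Or.inr (Or.inr (Or.inr (Or.inr h))))))]
  · intro h
    constructor
    · simp only [Set.mem_insert_iff, Set.mem_singleton_iff, Sym2.eq_iff]
      rcases h with h|h|h|h|h|h|h|h
      exacts [Or.inl (Or.inl h), Or.inl (Or.inr h), Or.inr (Or.inl (Or.inl h)),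
        Or.inr (Or.inl (Or.inr h)), Or.inr (Or.inr (Or.inl (Or.inl h))),
        Or.inr (Or.inr (Or.inl (Or.inr h))), Or.inr (Or.inr (Or.inr (Or.inl h))),
        Or.inr (Or.inr (Or.inr (Or.inr h)))]
    · rcases h with ⟨rfl,rfl⟩|⟨rfl,rfl⟩|⟨rfl,rfl⟩|⟨rfl,rfl⟩|⟨rfl,rfl⟩|⟨rfl,rfl⟩|⟨rfl,rfl⟩|⟨rfl,rfl⟩
      · exact x0_ne_x1 s
      · exact (x0_ne_x1 s).symm
      · exact x1_ne_x2 s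
      · exact (x1_ne_x2 s).symm
      · exact x3_ne_x4 s
      · exact (x3_ne_x4 s).symm
      · exact x4_ne_x5 s
      · exact (x4_ne_x5 s).symm

lemma bg_bridge_e1 : (bridgeGraph (Gr s)).IsBridge s(x0 s, x1 s) := by
  rw [isBridge_iff]
  refine fun hr => ?_
  have key := reach_inv (fun x : Vt s => x = x0 s) (fun x y hxy => ?_) hr
  · exact (x0_ne_x1 s) (key.1 rfl).symm
  obtain ⟨ha, hne⟩ := del_adj' hxy
  rcases (bg_adj s).1 ha with ⟨rfl,rfl⟩|⟨rfl,rfl⟩|⟨rfl,rfl⟩|⟨rfl,rfl⟩|⟨rfl,rfl⟩|⟨rfl,rfl⟩|⟨rfl,rfl⟩|⟨rfl,rfl⟩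
  · exact absurd rfl hne
  · exact absurd Sym2.eq_swap hne
  · exact iff_of_false (x0_ne_x1 s).symm (x0_ne_x2 s).symm
  · exact iff_of_false (x0_ne_x2 s).symm (x0_ne_x1 s).symm
  · exact iff_of_false (x0_ne_x3 s).symm (x0_ne_x4 s).symm
  · exact iff_of_false (x0_ne_x4 s).symm (x0_ne_x3 s).symm
  · exact iff_of_false (x0_ne_x4 s).symm (x0_ne_x5 s).symm
  · exact iff_of_false (x0_ne_x5 s).symm (x0_ne_x4 s).symm

lemma bg_bridge_e2 : (bridgeGraph (Gr s)).IsBridge s(x1 s, x2 s) := by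
  rw [isBridge_iff]
  refine fun hr => ?_
  have key := reach_inv (fun x : Vt s => x = x0 s ∨ x = x1 s) (fun x y hxy => ?_) hr
  · rcases key.1 (Or.inr rfl) with h | h
    · exact (x0_ne_x2 s) h.symm
    · exact (x1_ne_x2 s) h.symm
  obtain ⟨ha, hne⟩ := del_adj' hxy
  rcases (bg_adj s).1 ha with ⟨rfl,rfl⟩|⟨rfl,rfl⟩|⟨rfl,rfl⟩|⟨rfl,rfl⟩|⟨rfl,rfl⟩|⟨rfl,rfl⟩|⟨rfl,rfl⟩|⟨rfl,rfl⟩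
  · exact iff_of_true (Or.inl rfl) (Or.inr rfl)
  · exact iff_of_true (Or.inr rfl) (Or.inl rfl)
  · exact absurd rfl hne
  · exact absurd Sym2.eq_swap hne
  · refine iff_of_false ?_ ?_ <;> rintro (h | h)
    · exact (x0_ne_x3 s) h.symm
    · exact (x1_ne_x3 s) h.symm
    · exact (x0_ne_x4 s) h.symm
    · exact (x1_ne_x4 s) h.symm
  · refine iff_of_false ?_ ?_ <;> rintro (h | h)
    · exact (x0_ne_x4 s) h.symm
    · exact (x1_ne_x4 s) h.symm
    · exact (x0_ne_x3 s) h.symm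
    · exact (x1_ne_x3 s) h.symm
  · refine iff_of_false ?_ ?_ <;> rintro (h | h)
    · exact (x0_ne_x4 s) h.symm
    · exact (x1_ne_x4 s) h.symm
    · exact (x0_ne_x5 s) h.symm
    · exact (x1_ne_x5 s) h.symm
  · refine iff_of_false ?_ ?_ <;> rintro (h | h)
    · exact (x0_ne_x5 s) h.symm
    · exact (x1_ne_x5 s) h.symm
    · exact (x0_ne_x4 s) h.symm
    · exact (x1_ne_x4 s) h.symm

lemma bg_bridge_e3 : (bridgeGraph (Gr s)).IsBridge s(x3 s, x4 s) := by
  rw [isBridge_iff]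
  refine fun hr => ?_
  have key := reach_inv (fun x : Vt s => x = x3 s) (fun x y hxy => ?_) hr
  · exact (x3_ne_x4 s) (key.1 rfl).symm
  obtain ⟨ha, hne⟩ := del_adj' hxy
  rcases (bg_adj s).1 ha with ⟨rfl,rfl⟩|⟨rfl,rfl⟩|⟨rfl,rfl⟩|⟨rfl,rfl⟩|⟨rfl,rfl⟩|⟨rfl,rfl⟩|⟨rfl,rfl⟩|⟨rfl,rfl⟩
  · exact iff_of_false (x0_ne_x3 s) (x1_ne_x3 s)
  · exact iff_of_false (x1_ne_x3 s) (x0_ne_x3 s)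
  · exact iff_of_false (x1_ne_x3 s) (x2_ne_x3 s)
  · exact iff_of_false (x2_ne_x3 s) (x1_ne_x3 s)
  · exact absurd rfl hne
  · exact absurd Sym2.eq_swap hne
  · exact iff_of_false (x3_ne_x4 s).symm (x3_ne_x5 s).symm
  · exact iff_of_false (x3_ne_x5 s).symm (x3_ne_x4 s).symm

lemma bg_bridge_e4 : (bridgeGraph (Gr s)).IsBridge s(x4 s, x5 s) := by
  rw [isBridge_iff]
  refine
    fun hr => ?_
  have key := reach_inv (fun x : Vt s => x = x5 s) (fun x y hxy => ?_) hr
  · exact (x4_ne_x5 s) (key.2 rfl)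
  obtain ⟨ha, hne⟩ := del_adj' hxy
  rcases (bg_adj s).1 ha with ⟨rfl,rfl⟩|⟨rfl,rfl⟩|⟨rfl,rfl⟩|⟨rfl,rfl⟩|⟨rfl,rfl⟩|⟨rfl,rfl⟩|⟨rfl,rfl⟩|⟨rfl,rfl⟩
  · exact iff_of_false (x0_ne_x5 s) (x1_ne_x5 s)
  · exact iff_of_false (x1_ne_x5 s) (x0_ne_x5 s)
  · exact iff_of_false (x1_ne_x5 s) (x2_ne_x5 s)
  · exact iff_of_false (x2_ne_x5 s) (x1_ne_x5 s)
  · exact iff_of_false (x3_ne_x5 s) (x4_ne_x5 s)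
  · exact iff_of_false (x4_ne_x5 s) (x3_ne_x5 s)
  · exact absurd rfl hne
  · exact absurd Sym2.eq_swap hne

lemma bg_acyclic : (bridgeGraph (Gr s)).IsAcyclic := by
  rw [isAcyclic_iff_forall_edge_isBridge]
  intro e he
  induction e with
  | h u v =>
    rw [mem_edgeSet] at he
    rcases (bg_adj s).1 he with ⟨rfl,rfl⟩|⟨rfl,rfl⟩|⟨rfl,rfl⟩|⟨rfl,rfl⟩|⟨rfl,rfl⟩|⟨rfl,rfl⟩|⟨rfl,rfl⟩|⟨rfl,rfl⟩
    · exact bg_bridge_e1 s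
    · exact Sym2.eq_swap ▸ bg_bridge_e1 s
    · exact bg_bridge_e2 s
    · exact Sym2.eq_swap ▸ bg_bridge_e2 s
    · exact bg_bridge_e3 s
    · exact Sym2.eq_swap ▸ bg_bridge_e3 s
    · exact bg_bridge_e4 s
    · exact Sym2.eq_swap ▸ bg_bridge_e4 s


lemma pair_ncard_le {W : Type*} (a b : W) : ({a, b} : Set W).ncard ≤ 2 := by
  classical
  by_cases h : a = b
  · subst h; simp
  · rw [Set.ncard_pair h]

lemma bg_deg_le (v : Vt s) : ((bridgeGraph (Gr s)).neighborSet v).ncard ≤ 2 := by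
  by_cases h0 : v = x0 s
  · subst h0
    have hsub : (bridgeGraph (Gr s)).neighborSet (x0 s) ⊆ {x1 s, x1 s} := by
      intro w hw
      rcases (bg_adj s).1 hw with ⟨h,rfl⟩|⟨h,rfl⟩|⟨h,rfl⟩|⟨h,rfl⟩|⟨h,rfl⟩|⟨h,rfl⟩|⟨h,rfl⟩|⟨h,rfl⟩
      · exact Or.inl rfl
      · exact absurd h (x0_ne_x1 s)
      · exact absurd h (x0_ne_x1 s)
      · exact absurd h (x0_ne_x2 s)
      · exact absurd h (x0_ne_x3 s)
      · exact absurd h (x0_ne_x4 s)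
      · exact absurd h (x0_ne_x4 s)
      · exact absurd h (x0_ne_x5 s)
    exact (Set.ncard_le_ncard hsub (Set.toFinite _)).trans (pair_ncard_le _ _)
  by_cases h1 : v = x1 s
  · subst h1
    have hsub : (bridgeGraph (Gr s)).neighborSet (x1 s) ⊆ {x0 s, x2 s} := by
      intro w hw
      rcases (bg_adj s).1 hw with ⟨h,rfl⟩|⟨h,rfl⟩|⟨h,rfl⟩|⟨h,rfl⟩|⟨h,rfl⟩|⟨h,rfl⟩|⟨h,rfl⟩|⟨h,rfl⟩
      · exact absurd h.symm (x0_ne_x1 s)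
      · exact Or.inl rfl
      · exact Or.inr rfl
      · exact absurd h (x1_ne_x2 s)
      · exact absurd h (x1_ne_x3 s)
      · exact absurd h (x1_ne_x4 s)
      · exact absurd h (x1_ne_x4 s)
      · exact absurd h (x1_ne_x5 s)
    exact (Set.ncard_le_ncard hsub (Set.toFinite _)).trans (pair_ncard_le _ _)
  by_cases h2 : v = x2 s
  · subst h2
    have hsub : (bridgeGraph (Gr s)).neighborSet (x2 s) ⊆ {x1 s, x1 s} := by
      intro w hw
      rcases (bg_adj s).1 hw with ⟨h,rfl⟩|⟨h,rfl⟩|⟨h,rfl⟩|⟨h,rfl⟩|⟨h,rfl⟩|⟨h,rfl⟩|⟨h,rfl⟩|⟨h,rfl⟩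
      · exact absurd h.symm (x0_ne_x2 s)
      · exact absurd h.symm (x1_ne_x2 s)
      · exact absurd h.symm (x1_ne_x2 s)
      · exact Or.inl rfl
      · exact absurd h.symm (x2_ne_x3 s).symm
      · exact absurd h (x2_ne_x4 s)
      · exact absurd h (x2_ne_x4 s)
      · exact absurd h (x2_ne_x5 s)
    exact (Set.ncard_le_ncard hsub (Set.toFinite _)).trans (pair_ncard_le _ _)
  by_cases h3 : v = x3 s
  · subst h3
    have hsub : (bridgeGraph (Gr s)).neighborSet (x3 s) ⊆ {x4 s, x4 s} := by
      intro w hw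
      rcases (bg_adj s).1 hw with ⟨h,rfl⟩|⟨h,rfl⟩|⟨h,rfl⟩|⟨h,rfl⟩|⟨h,rfl⟩|⟨h,rfl⟩|⟨h,rfl⟩|⟨h,rfl⟩
      · exact absurd h.symm (x0_ne_x3 s)
      · exact absurd h.symm (x1_ne_x3 s)
      · exact absurd h.symm (x1_ne_x3 s)
      · exact absurd h.symm (x2_ne_x3 s)
      · exact Or.inl rfl
      · exact absurd h (x3_ne_x4 s)
      · exact absurd h (x3_ne_x4 s)
      · exact absurd h (x3_ne_x5 s)
    exact (Set.ncard_le_ncard hsub (Set.toFinite _)).trans (pair_ncard_le _ _)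
  by_cases h4 : v = x4 s
  · subst h4
    have hsub : (bridgeGraph (Gr s)).neighborSet (x4 s) ⊆ {x3 s, x5 s} := by
      intro w hw
      rcases (bg_adj s).1 hw with ⟨h,rfl⟩|⟨h,rfl⟩|⟨h,rfl⟩|⟨h,rfl⟩|⟨h,rfl⟩|⟨h,rfl⟩|⟨h,rfl⟩|⟨h,rfl⟩
      · exact absurd h.symm (x0_ne_x4 s)
      · exact absurd h.symm (x1_ne_x4 s)
      · exact absurd h.symm (x1_ne_x4 s)
      · exact absurd h.symm (x2_ne_x4 s)
      · exact absurd h.symm (x3_ne_x4 s)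
      · exact Or.inl rfl
      · exact Or.inr rfl
      · exact absurd h.symm (x4_ne_x5 s).symm
    exact (Set.ncard_le_ncard hsub (Set.toFinite _)).trans (pair_ncard_le _ _)
  by_cases h5 : v = x5 s
  · subst h5
    have hsub : (bridgeGraph (Gr s)).neighborSet (x5 s) ⊆ {x4 s, x4 s} := by
      intro w hw
      rcases (bg_adj s).1 hw with ⟨h,rfl⟩|⟨h,rfl⟩|⟨h,rfl⟩|⟨h,rfl⟩|⟨h,rfl⟩|⟨h,rfl⟩|⟨h,rfl⟩|⟨h,rfl⟩
      · exact absurd h.symm (x0_ne_x5 s)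
      · exact absurd h.symm (x1_ne_x5 s)
      · exact absurd h.symm (x1_ne_x5 s)
      · exact absurd h.symm (x2_ne_x5 s)
      · exact absurd h.symm (x3_ne_x5 s)
      · exact absurd h.symm (x4_ne_x5 s)
      · exact absurd h.symm (x4_ne_x5 s)
      · exact Or.inl rfl
    exact (Set.ncard_le_ncard hsub (Set.toFinite _)).trans (pair_ncard_le _ _)
  · have hsub : (bridgeGraph (Gr s)).neighborSet v ⊆ (∅ : Set (Vt s)) := by
      intro w hw
      rcases (bg_adj s).1 hw with ⟨h,-⟩|⟨h,-⟩|⟨h,-⟩|⟨h,-⟩|⟨h,-⟩|⟨h,-⟩|⟨h,-⟩|⟨h,-⟩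
      exacts [absurd h h0, absurd h h1, absurd h h1, absurd h h2, absurd h h3,
        absurd h h4, absurd h h4, absurd h h5]
    have h := Set.ncard_le_ncard hsub (Set.toFinite _)
    simp only [Set.ncard_empty] at h
    omega

lemma bg_isLinearForest : IsLinearForest (bridgeGraph (Gr s)) :=
  ⟨bg_acyclic s, bg_deg_le s⟩

/-- membership predicate preserved on left part -/
lemma bg_left_inv {x y : Vt s} (h : (bridgeGraph (Gr s)).Adj x y) :
    (x = x0 s ∨ x = x1 s ∨ x = x2 s) ↔ (y = x0 s ∨ y = x1 s ∨ y = x2 s) := by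
  rcases (bg_adj s).1 h with ⟨rfl,rfl⟩|⟨rfl,rfl⟩|⟨rfl,rfl⟩|⟨rfl,rfl⟩|⟨rfl,rfl⟩|⟨rfl,rfl⟩|⟨rfl,rfl⟩|⟨rfl,rfl⟩
  · exact iff_of_true (Or.inl rfl) (Or.inr (Or.inl rfl))
  · exact iff_of_true (Or.inr (Or.inl rfl)) (Or.inl rfl)
  · exact iff_of_true (Or.inr (Or.inl rfl)) (Or.inr (Or.inr rfl))
  · exact iff_of_true (Or.inr (Or.inr rfl)) (Or.inr (Or.inl rfl))
  all_goals refine iff_of_false ?_ ?_ <;> rintro (h|h|h)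
  · exact x0_ne_x3 s h.symm
  · exact x1_ne_x3 s h.symm
  · exact x2_ne_x3 s h.symm
  · exact x0_ne_x4 s h.symm
  · exact x1_ne_x4 s h.symm
  · exact x2_ne_x4 s h.symm
  · exact x0_ne_x4 s h.symm
  · exact x1_ne_x4 s h.symm
  · exact x2_ne_x4 s h.symm
  · exact x0_ne_x3 s h.symm
  · exact x1_ne_x3 s h.symm
  · exact x2_ne_x3 s h.symm
  · exact x0_ne_x4 s h.symm
  · exact x1_ne_x4 s h.symm
  · exact x2_ne_x4 s h.symm
  · exact x0_ne_x5 s h.symm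
  · exact x1_ne_x5 s h.symm
  · exact x2_ne_x5 s h.symm
  · exact x0_ne_x5 s h.symm
  · exact x1_ne_x5 s h.symm
  · exact x2_ne_x5 s h.symm
  · exact x0_ne_x4 s h.symm
  · exact x1_ne_x4 s h.symm
  · exact x2_ne_x4 s h.symm


lemma bg_right_inv {x y : Vt s} (h : (bridgeGraph (Gr s)).Adj x y) :
    (x = x3 s ∨ x = x4 s ∨ x = x5 s) ↔ (y = x3 s ∨ y = x4 s ∨ y = x5 s) := by
  rcases (bg_adj s).1 h with ⟨rfl,rfl⟩|⟨rfl,rfl⟩|⟨rfl,rfl⟩|⟨rfl,rfl⟩|⟨rfl,rfl⟩|⟨rfl,rfl⟩|⟨rfl,rfl⟩|⟨rfl,rfl⟩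
  · refine iff_of_false ?_ ?_ <;> rintro (h|h|h)
    exacts [x0_ne_x3 s h, x0_ne_x4 s h, x0_ne_x5 s h, x1_ne_x3 s h, x1_ne_x4 s h, x1_ne_x5 s h]
  · refine iff_of_false ?_ ?_ <;> rintro (h|h|h)
    exacts [x1_ne_x3 s h, x1_ne_x4 s h, x1_ne_x5 s h, x0_ne_x3 s h, x0_ne_x4 s h, x0_ne_x5 s h]
  · refine iff_of_false ?_ ?_ <;> rintro (h|h|h)
    exacts [x1_ne_x3 s h, x1_ne_x4 s h, x1_ne_x5 s h, x2_ne_x3 s h, x2_ne_x4 s h, x2_ne_x5 s h]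
  · refine iff_of_false ?_ ?_ <;> rintro (h|h|h)
    exacts [x2_ne_x3 s h, x2_ne_x4 s h, x2_ne_x5 s h, x1_ne_x3 s h, x1_ne_x4 s h, x1_ne_x5 s h]
  · exact iff_of_true (Or.inl rfl) (Or.inr (Or.inl rfl))
  · exact iff_of_true (Or.inr (Or.inl rfl)) (Or.inl rfl)
  · exact iff_of_true (Or.inr (Or.inl rfl)) (Or.inr (Or.inr rfl))
  · exact iff_of_true (Or.inr (Or.inr rfl)) (Or.inr (Or.inl rfl))

lemma bg_supp1 : ((bridgeGraph (Gr s)).connectedComponentMk (x1 s)).supp =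
    {x0 s, x1 s, x2 s} := by
  ext y
  rw [ConnectedComponent.mem_supp_iff, ConnectedComponent.eq]
  constructor
  · intro hr
    have := reach_inv (fun x : Vt s => x = x0 s ∨ x = x1 s ∨ x = x2 s)
      (fun x y h => bg_left_inv s h) hr
    simpa using this.2 (Or.inr (Or.inl rfl))
  · rintro (rfl | rfl | rfl)
    · exact (Adj.reachable ((bg_adj s).2 (Or.inl ⟨rfl, rfl⟩))).symm.symm
    · rfl
    · exact Adj.reachable ((bg_adj s).2 (Or.inr (Or.inr (Or.inr (Or.inl ⟨rfl, rfl⟩)))))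

lemma bg_supp4 : ((bridgeGraph (Gr s)).connectedComponentMk (x4 s)).supp =
    {x3 s, x4 s, x5 s} := by
  ext y
  rw [ConnectedComponent.mem_supp_iff, ConnectedComponent.eq]
  constructor
  · intro hr
    have := reach_inv (fun x : Vt s => x = x3 s ∨ x = x4 s ∨ x = x5 s)
      (fun x y h => bg_right_inv s h) hr
    simpa using this.2 (Or.inr (Or.inl rfl))
  · rintro (rfl | rfl | rfl)
    · exact Adj.reachable ((bg_adj s).2 (Or.inr (Or.inr (Or.inr (Or.inr (Or.inl ⟨rfl, rfl⟩))))))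
    · rfl
    · exact (Adj.reachable ((bg_adj s).2
        (Or.inr (Or.inr (Or.inr (Or.inr (Or.inr (Or.inr (Or.inl ⟨rfl, rfl⟩))))))))).symm


lemma bg_supp1_ncard : ((bridgeGraph (Gr s)).connectedComponentMk (x1 s)).supp.ncard = 3 := by
  rw [bg_supp1]
  rw [Set.ncard_insert_of_notMem (by
    rintro (h | h)
    · exact x0_ne_x1 s h
    · exact x0_ne_x2 s h) (Set.toFinite _)]
  rw [Set.ncard_pair (x1_ne_x2 s)]

lemma bg_supp4_ncard : ((bridgeGraph (Gr s)).connectedComponentMk (x4 s)).supp.ncard = 3 := by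
  rw [bg_supp4]
  rw [Set.ncard_insert_of_notMem (by
    rintro (h | h)
    · exact x3_ne_x4 s h
    · exact x3_ne_x5 s h) (Set.toFinite _)]
  rw [Set.ncard_pair (x4_ne_x5 s)]

lemma bg_c1_ne_c2 : (bridgeGraph (Gr s)).connectedComponentMk (x1 s) ≠
    (bridgeGraph (Gr s)).connectedComponentMk (x4 s) := by
  intro h
  rw [ConnectedComponent.eq] at h
  have := reach_inv (fun x : Vt s => x = x0 s ∨ x = x1 s ∨ x = x2 s)
    (fun x y h => bg_left_inv s h) h
  rcases this.1 (Or.inr (Or.inl rfl)) with h | h | h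
  · exact x0_ne_x4 s h.symm
  · exact x1_ne_x4 s h.symm
  · exact x2_ne_x4 s h.symm

lemma bg_isolated {y : Vt s} (h0 : y ≠ x0 s) (h1 : y ≠ x1 s) (h2 : y ≠ x2 s)
    (h3 : y ≠ x3 s) (h4 : y ≠ x4 s) (h5 : y ≠ x5 s) {z : Vt s}
    (hr : (bridgeGraph (Gr s)).Reachable y z) : y = z := by
  obtain ⟨p⟩ := hr
  cases p with
  | nil => rfl
  | cons h q =>
    rcases (bg_adj s).1 h with ⟨h,-⟩|⟨h,-⟩|⟨h,-⟩|⟨h,-⟩|⟨h,-⟩|⟨h,-⟩|⟨h,-⟩|⟨h,-⟩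
    exacts [absurd h h0, absurd h h1, absurd h h1, absurd h h2, absurd h h3,
      absurd h h4, absurd h h4, absurd h h5]

lemma bg_component_classify (C : (bridgeGraph (Gr s)).ConnectedComponent)
    (hC : 2 ≤ C.supp.ncard) :
    C = (bridgeGraph (Gr s)).connectedComponentMk (x1 s) ∨
    C = (bridgeGraph (Gr s)).connectedComponentMk (x4 s) := by
  obtain ⟨y, rfl⟩ := C.exists_rep
  by_cases hy : (y = x0 s ∨ y = x1 s ∨ y = x2 s) ∨ (y = x3 s ∨ y = x4 s ∨ y = x5 s)
  · rcases hy with (rfl | rfl | rfl) | (rfl | rfl | rfl)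
    · exact Or.inl (ConnectedComponent.eq.2
        (Adj.reachable ((bg_adj s).2 (Or.inl ⟨rfl, rfl⟩))))
    · exact Or.inl rfl
    · exact Or.inl (ConnectedComponent.eq.2
        (Adj.reachable ((bg_adj s).2 (Or.inr (Or.inr (Or.inr (Or.inl ⟨rfl, rfl⟩)))))))
    · exact Or.inr (ConnectedComponent.eq.2
        (Adj.reachable ((bg_adj s).2 (Or.inr (Or.inr (Or.inr (Or.inr (Or.inl ⟨rfl, rfl⟩))))))))
    · exact Or.inr rfl
    · exact Or.inr (ConnectedComponent.eq.2
        (Adj.reachable ((bg_adj s).2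
          (Or.inr (Or.inr (Or.inr (Or.inr (Or.inr (Or.inr (Or.inr ⟨rfl, rfl⟩))))))))))
  · exfalso
    push_neg at hy
    obtain ⟨⟨h0, h1, h2⟩, h3, h4, h5⟩ := hy
    have hsupp : ((bridgeGraph (Gr s)).connectedComponentMk y).supp = {y} := by
      ext z
      rw [ConnectedComponent.mem_supp_iff, ConnectedComponent.eq]
      constructor
      · intro hr
        exact (bg_isolated s h0 h1 h2 h3 h4 h5 hr.symm).symm
      · rintro rfl
        rfl
    have hC' : 2 ≤ ((bridgeGraph (Gr s)).connectedComponentMk y).supp.ncard := hC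
    rw [hsupp, Set.ncard_singleton] at hC'
    omega


lemma gr_cf_exists : IsCFConnected (Gr s)
    (fun e => ((Fintype.equivFin (Sym2 (Vt s))) e : ℕ)) := by
  intro u v huv
  obtain ⟨w⟩ := (gr_connected s).preconnected u v
  refine ⟨w.toPath.1, w.toPath.2, ?_⟩
  set c : Sym2 (Vt s) → ℕ := fun e => ((Fintype.equivFin (Sym2 (Vt s))) e : ℕ) with hc
  have hinj : Function.Injective c := fun a b h =>
    (Fintype.equivFin (Sym2 (Vt s))).injective (Fin.val_injective h)
  set p := w.toPath.1 with hp
  have hnodup : p.edges.Nodup := w.toPath.2.isTrail.edges_nodup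
  have hne : p.edges ≠ [] := by
    intro h
    have h0 : p.length = 0 := by
      have := congrArg List.length h
      simpa [Walk.length_edges] using this
    exact huv (Walk.eq_of_length_eq_zero h0)
  obtain ⟨e0, rest, hrest⟩ : ∃ e0 rest, p.edges = e0 :: rest := by
    cases he : p.edges with
    | nil => exact absurd he hne
    | cons a l => exact ⟨a, l, rfl⟩
  refine ⟨c e0, ?_⟩
  rw [hrest]
  rw [List.filter_cons_of_pos (by simp)]
  have hrf : rest.filter (fun e => decide (c e = c e0)) = [] := by
    rw [List.filter_eq_nil_iff]
    intro e he
    simp only [decide_eq_true_eq]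
    intro hco
    have : e = e0 := hinj hco
    subst this
    rw [hrest] at hnodup
    exact (List.nodup_cons.1 hnodup).1 he
  rw [hrf]
  rfl

lemma cfc_set_nonempty : ∃ k, k ∈ {k | ∃ c : Sym2 (Vt s) → ℕ,
    (∀ e ∈ (Gr s).edgeSet, c e < k) ∧ IsCFConnected (Gr s) c} := by
  exact ⟨Fintype.card (Sym2 (Vt s)), ⟨fun e => ((Fintype.equivFin (Sym2 (Vt s))) e : ℕ),
    fun e _ => (Fintype.equivFin (Sym2 (Vt s)) e).isLt, gr_cf_exists s⟩⟩

lemma cfc_lower {k : ℕ} (c : Sym2 (Vt s) → ℕ) (hc : ∀ e ∈ (Gr s).edgeSet, c e < k)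
    (hcf : IsCFConnected (Gr s) c) : 3 ≤ k := by
  by_contra hk
  push_neg at hk
  have hce : ∀ e ∈ (Gr s).edgeSet, c e < 2 := fun e he => by have := hc e he; omega
  have hE1 : c s(x0 s, x1 s) < 2 := hce _ (((Gr s).mem_edgeSet).2 (adj01 s))
  have hE2 : c s(x1 s, x2 s) < 2 := hce _ (((Gr s).mem_edgeSet).2 (adj12 s))
  have hE3 : c s(x3 s, x4 s) < 2 := hce _ (((Gr s).mem_edgeSet).2 (adj34 s))
  have hE4 : c s(x4 s, x5 s) < 2 := hce _ (((Gr s).mem_edgeSet).2 (adj45 s))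
  have h12 : c s(x0 s, x1 s) ≠ c s(x1 s, x2 s) := by
    obtain ⟨p, hp, col, hlen⟩ := hcf (x0 s) (x2 s) (x0_ne_x2 s)
    rw [path02 s p hp rfl] at hlen
    intro heq
    by_cases hcol : c s(x0 s, x1 s) = col
    · have h2 : c s(x1 s, x2 s) = col := heq ▸ hcol
      simp [List.filter_cons, hcol, h2] at hlen
    · have h2 : c s(x1 s, x2 s) ≠ col := fun h => hcol (heq.trans h)
      simp [List.filter_cons, hcol, h2] at hlen
  have h34 : c s(x3 s, x4 s) ≠ c s(x4 s, x5 s) := by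
    obtain ⟨p, hp, col, hlen⟩ := hcf (x3 s) (x5 s) (x3_ne_x5 s)
    rw [path35 s p hp rfl] at hlen
    intro heq
    by_cases hcol : c s(x3 s, x4 s) = col
    · have h2 : c s(x4 s, x5 s) = col := heq ▸ hcol
      simp [List.filter_cons, hcol, h2] at hlen
    · have h2 : c s(x4 s, x5 s) ≠ col := fun h => hcol (heq.trans h)
      simp [List.filter_cons, hcol, h2] at hlen
  obtain ⟨p, hp, col, hlen⟩ := hcf (x0 s) (x5 s) (x0_ne_x5 s)
  have m1 : s(x0 s, x1 s) ∈ p.edges :=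
    (walk_cross s (n := 0) (by norm_num) p (by rw [v0f]) (by rw [v5f]; norm_num)).1
  have m2 : s(x1 s, x2 s) ∈ p.edges :=
    (walk_cross s (n := 1) (by norm_num) p (by rw [v0f]; norm_num) (by rw [v5f]; norm_num)).1
  have m3 : s(x3 s, x4 s) ∈ p.edges :=
    (walk_cross s (n := 2) (by norm_num) p (by rw [v0f]; norm_num) (by rw [v5f]; norm_num)).1
  have m4 : s(x4 s, x5 s) ∈ p.edges :=
    (walk_cross s (n := 3) (by norm_num) p (by rw [v0f]; norm_num) (by rw [v5f]; norm_num)).1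
  rcases Nat.lt_or_ge col 2 with hcol2 | hcol2
  · have key : ∀ a b : Sym2 (Vt s), a ≠ b → c a = col → c b = col →
        a ∈ p.edges → b ∈ p.edges → False := by
      intro a b hne hca hcb hpa hpb
      obtain ⟨x, hx⟩ := List.length_eq_one_iff.1 hlen
      have ha' : a ∈ p.edges.filter (fun e => decide (c e = col)) :=
        List.mem_filter.2 ⟨hpa, by simp [hca]⟩
      have hb' : b ∈ p.edges.filter (fun e => decide (c e = col)) :=
        List.mem_filter.2 ⟨hpb, by simp [hcb]⟩
      rw [hx] at ha' hb'
      simp only [List.mem_singleton] at ha' hb'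
      exact hne (ha'.trans hb'.symm)
    have hpick1 : c s(x0 s, x1 s) = col ∨ c s(x1 s, x2 s) = col := by omega
    have hpick2 : c s(x3 s, x4 s) = col ∨ c s(x4 s, x5 s) = col := by omega
    rcases hpick1 with h1 | h1 <;> rcases hpick2 with h2 | h2
    · exact key _ _ (sym2_ne s (Or.inl (x0_ne_x3 s)) (Or.inl (x0_ne_x4 s))) h1 h2 m1 m3
    · exact key _ _ (sym2_ne s (Or.inl (x0_ne_x4 s)) (Or.inl (x0_ne_x5 s))) h1 h2 m1 m4
    · exact key _ _ (sym2_ne s (Or.inl (x1_ne_x3 s)) (Or.inl (x1_ne_x4 s))) h1 h2 m2 m3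
    · exact key _ _ (sym2_ne s (Or.inl (x1_ne_x4 s)) (Or.inl (x1_ne_x5 s))) h1 h2 m2 m4
  · have hnil : p.edges.filter (fun e => decide (c e = col)) = [] := by
      rw [List.filter_eq_nil_iff]
      intro e he
      have := hce e (p.edges_subset_edgeSet he)
      simp only [decide_eq_true_eq]
      omega
    rw [hnil] at hlen
    simp at hlen

lemma cfc_ge3 : 3 ≤ cfcNum (Gr s) := by
  rw [cfcNum]
  exact le_csInf (cfc_set_nonempty s) (fun k hk => by
    obtain ⟨c, hc, hcf⟩ := hk
    exact cfc_lower s c hc hcf)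

end CFC11

theorem stmt_11 (t : ℕ) (ht : 3 ≤ t) :
    ∃ (V : Type) (_ : Fintype V) (S : SimpleGraph V),
      Fintype.card V = 5 * t ∧ S.Connected ∧
      (∀ v, t - 1 ≤ vdeg S v) ∧ (∃ v, vdeg S v = t - 1) ∧
      IsLinearForest (bridgeGraph S) ∧
      (∃ C₁ C₂ : (bridgeGraph S).ConnectedComponent, C₁ ≠ C₂ ∧
        C₁.supp.ncard = 3 ∧ C₂.supp.ncard = 3 ∧
        ∀ C : (bridgeGraph S).ConnectedComponent, 2 ≤ C.supp.ncard → C = C₁ ∨ C = C₂) ∧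
      3 ≤ cfcNum S := by
  obtain ⟨s, rfl⟩ : ∃ s, t = s + 3 := ⟨t - 3, by omega⟩
  refine ⟨CFC11.Vt s, inferInstance, CFC11.Gr s, ?_, CFC11.gr_connected s, ?_, ?_,
    CFC11.bg_isLinearForest s, ?_, CFC11.cfc_ge3 s⟩
  · simp [CFC11.Vt]
  · intro v
    have h := CFC11.vdeg_lower s v
    simp only [vdeg]
    omega
  · refine ⟨((0 : Fin 5), (1 : Fin (s+3))), ?_⟩
    simp only [vdeg]
    rw [CFC11.vdeg_exact s]
    omega
  · exact ⟨(bridgeGraph (CFC11.Gr s)).connectedComponentMk (CFC11.x1 s),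
      (bridgeGraph (CFC11.Gr s)).connectedComponentMk (CFC11.x4 s),
      CFC11.bg_c1_ne_c2 s, CFC11.bg_supp1_ncard s, CFC11.bg_supp4_ncard s,
      CFC11.bg_component_classify s⟩
end

section
/- For every n divisible by 4 with n/4 ≥ 4, the graph H obtained from four disjoint complete graphs H₁, H₂, H₃, H₄ each of order n/4 by choosing a vertex vᵢ in each Hᵢ and adding the edges v₁v₂, v₁v₃, v₁v₄ satisfies δ(H) = (n−4)/4 and cfc(H) ≥ 3. -/
open SimpleGraph

/-- Four complete graphs of order `m` with hub vertices `(i, 0)`; the hub of block `0`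
is joined to the hubs of the other three blocks. -/
def Hgraph (m : ℕ) : SimpleGraph (Fin 4 × Fin m) :=
  SimpleGraph.fromRel (fun x y => x.1 = y.1 ∨ (x.2.val = 0 ∧ y.2.val = 0 ∧ x.1 = 0))

lemma hgraph_adj {m : ℕ} {x y : Fin 4 × Fin m} :
    (Hgraph m).Adj x y ↔ x ≠ y ∧ (x.1 = y.1 ∨
      (x.2.val = 0 ∧ y.2.val = 0 ∧ (x.1 = 0 ∨ y.1 = 0))) := by
  simp only [Hgraph, fromRel_adj]
  constructor
  · rintro ⟨h, (h1|⟨h1,h2,h3⟩)|(h1|⟨h1,h2,h3⟩)⟩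
    · exact ⟨h, Or.inl h1⟩
    · exact ⟨h, Or.inr ⟨h1, h2, Or.inl h3⟩⟩
    · exact ⟨h, Or.inl h1.symm⟩
    · exact ⟨h, Or.inr ⟨h2, h1, Or.inr h3⟩⟩
  · rintro ⟨h, h1|⟨h1,h2,h3|h3⟩⟩
    · exact ⟨h, Or.inl (Or.inl h1)⟩
    · exact ⟨h, Or.inl (Or.inr ⟨h1,h2,h3⟩)⟩
    · exact ⟨h, Or.inr (Or.inr ⟨h2,h1,h3⟩)⟩

-- walks avoiding the hub (0,0) stay within one block

lemma block_const {m : ℕ} (hm : 0 < m) : ∀ {u v : Fin 4 × Fin m}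
    (p : (Hgraph m).Walk u v), ((0 : Fin 4), (⟨0, hm⟩ : Fin m)) ∉ p.support → u.1 = v.1 := by
  intro u v p
  induction p with
  | nil => intro _; rfl
  | cons h q ih =>
    intro hs
    rw [SimpleGraph.Walk.support_cons, List.mem_cons] at hs
    push_neg at hs
    obtain ⟨hs1, hs2⟩ := hs
    rcases hgraph_adj.mp h with ⟨_, h1 | ⟨h1, h2, h3 | h3⟩⟩
    · exact h1.trans (ih hs2)
    · exact (hs1 (Prod.ext h3 (Fin.ext h1)).symm).elim
    · have e : _ = ((0 : Fin 4), (⟨0, hm⟩ : Fin m)) := Prod.ext h3 (Fin.ext h2)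
      exact (hs2 (e ▸ q.start_mem_support)).elim

-- a path from the hub to a block hub is a single edge

lemma hub_path_edges {m : ℕ} (hm : 0 < m) (j : Fin 4) (hj : j ≠ 0)
    (r : (Hgraph m).Walk ((0 : Fin 4), (⟨0, hm⟩ : Fin m)) (j, ⟨0, hm⟩)) (hr : r.IsPath) :
    r.edges = [s(((0 : Fin 4), (⟨0, hm⟩ : Fin m)), (j, ⟨0, hm⟩))] := by
  cases r with
  | nil => exact (hj rfl).elim
  | @cons _ w _ h r' =>
    have hr' : r'.IsPath := hr.of_cons
    have hns : ((0 : Fin 4), (⟨0, hm⟩ : Fin m)) ∉ r'.support := by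
      have := hr.support_nodup
      rw [SimpleGraph.Walk.support_cons] at this
      exact (List.nodup_cons.mp this).1
    have hw1 : w.1 = j := block_const hm r' hns
    have hw : w = (j, ⟨0, hm⟩) := by
      rcases hgraph_adj.mp h with ⟨hne, h1 | ⟨h1, h2, _⟩⟩
      · exact absurd (h1.trans hw1).symm hj
      · exact Prod.ext hw1 (Fin.ext h2)
    subst hw
    have : r' = SimpleGraph.Walk.nil := (SimpleGraph.Walk.isPath_iff_eq_nil (p := r')).mp hr'
    subst this
    simp

lemma spoke_path_edges {m : ℕ} (hm : 0 < m) (i : Fin 4) (hi : i ≠ 0)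
    (q : (Hgraph m).Walk (i, (⟨0, hm⟩ : Fin m)) ((0 : Fin 4), ⟨0, hm⟩)) (hq : q.IsPath) :
    q.edges = [s(((i : Fin 4), (⟨0, hm⟩ : Fin m)), ((0 : Fin 4), ⟨0, hm⟩))] := by
  have := hub_path_edges hm i hi q.reverse hq.reverse
  rw [SimpleGraph.Walk.edges_reverse] at this
  have := congrArg List.reverse this
  rw [List.reverse_reverse] at this
  rw [this]
  simp [Sym2.eq_swap]

lemma two_spoke_path_edges {m : ℕ} (hm : 0 < m) (i j : Fin 4) (hi : i ≠ 0) (hj : j ≠ 0)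
    (hij : i ≠ j) (p : (Hgraph m).Walk (i, (⟨0, hm⟩ : Fin m)) (j, ⟨0, hm⟩)) (hp : p.IsPath) :
    p.edges = [s(((i : Fin 4), (⟨0, hm⟩ : Fin m)), ((0 : Fin 4), ⟨0, hm⟩)),
      s(((0 : Fin 4), (⟨0, hm⟩ : Fin m)), (j, ⟨0, hm⟩))] := by
  have hhub : ((0 : Fin 4), (⟨0, hm⟩ : Fin m)) ∈ p.support := by
    by_contra hns
    exact hij (block_const hm p hns)
  have hspec := p.take_spec hhub
  have hq := hp.takeUntil hhub
  have hr := hp.dropUntil hhub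
  have he : p.edges = (p.takeUntil _ hhub).edges ++ (p.dropUntil _ hhub).edges := by
    conv_lhs => rw [← hspec]
    rw [SimpleGraph.Walk.edges_append]
  rw [he, spoke_path_edges hm i hi _ hq, hub_path_edges hm j hj _ hr]
  rfl

lemma compl_singleton_ncard {m : ℕ} (a : Fin m) : ({a}ᶜ : Set (Fin m)).ncard = m - 1 := by
  rw [Set.compl_eq_univ_diff, Set.ncard_diff (Set.subset_univ {a}),
    Set.ncard_univ, Nat.card_eq_fintype_card, Fintype.card_fin, Set.ncard_singleton]

lemma deg_lower {m : ℕ} (v : Fin 4 × Fin m) : m - 1 ≤ vdeg (Hgraph m) v := by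
  have hsub : (fun b => (v.1, b)) '' ({v.2}ᶜ : Set (Fin m)) ⊆ (Hgraph m).neighborSet v := by
    rintro _ ⟨b, hb, rfl⟩
    rw [SimpleGraph.mem_neighborSet, hgraph_adj]
    refine ⟨fun e => hb ?_, Or.inl rfl⟩
    · simp only [Set.mem_compl_iff, Set.mem_singleton_iff]
      exact congrArg Prod.snd e.symm
  have : ((fun b => ((v.1 : Fin 4), b)) '' ({v.2}ᶜ : Set (Fin m))).ncard = m - 1 := by
    rw [Set.ncard_image_of_injective _ (fun a b h => congrArg Prod.snd h),
      compl_singleton_ncard]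
  rw [vdeg, ← this]
  exact Set.ncard_le_ncard hsub (Set.toFinite _)

lemma deg_exact {m : ℕ} (hm : 4 ≤ m) :
    vdeg (Hgraph m) ((1 : Fin 4), (⟨1, by omega⟩ : Fin m)) = m - 1 := by
  set v : Fin 4 × Fin m := ((1 : Fin 4), (⟨1, by omega⟩ : Fin m)) with hv
  have hset : (Hgraph m).neighborSet v = (fun b => (v.1, b)) '' ({v.2}ᶜ : Set (Fin m)) := by
    ext w
    constructor
    · intro hw
      rw [SimpleGraph.mem_neighborSet, hgraph_adj] at hw
      obtain ⟨hne, h1 | ⟨h1, _, _⟩⟩ := hw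
      · refine ⟨w.2, fun e => hne ?_, by rw [h1]⟩
        · exact Prod.ext h1 (Set.mem_singleton_iff.mp e).symm
      · exact absurd h1 (by simp [hv])
    · intro hw
      rw [SimpleGraph.mem_neighborSet, hgraph_adj]
      obtain ⟨b, hb, rfl⟩ := hw
      exact ⟨fun e => hb (congrArg Prod.snd e.symm), Or.inl rfl⟩
  rw [vdeg, hset, Set.ncard_image_of_injective _ (fun a b h => congrArg Prod.snd h),
    compl_singleton_ncard]

lemma hgraph_preconnected {m : ℕ} (hm : 0 < m) : (Hgraph m).Preconnected := by
  have key : ∀ x : Fin 4 × Fin m, (Hgraph m).Reachable ((0:Fin 4), (⟨0,hm⟩ : Fin m)) x := by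
    intro ⟨i, a⟩
    by_cases hi : i = 0
    · subst hi
      by_cases ha : a = ⟨0, hm⟩
      · subst ha; rfl
      · exact SimpleGraph.Adj.reachable (hgraph_adj.mpr
          ⟨fun e => ha (congrArg Prod.snd e).symm, Or.inl rfl⟩)
    · have h1 : (Hgraph m).Adj ((0:Fin 4), (⟨0,hm⟩ : Fin m)) (i, ⟨0,hm⟩) :=
        hgraph_adj.mpr ⟨fun e => hi (congrArg Prod.fst e).symm, Or.inr ⟨rfl, rfl, Or.inl rfl⟩⟩
      by_cases ha : a = ⟨0, hm⟩
      · subst ha; exact h1.reachable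
      · exact h1.reachable.trans (SimpleGraph.Adj.reachable (hgraph_adj.mpr
          ⟨fun e => ha (congrArg Prod.snd e).symm, Or.inl rfl⟩))
  intro u v
  exact (key u).symm.trans (key v)

lemma cfc_set_nonempty {m : ℕ} (hm : 0 < m) :
    {k | ∃ c : Sym2 (Fin 4 × Fin m) → ℕ, (∀ e ∈ (Hgraph m).edgeSet, c e < k) ∧
      IsCFConnected (Hgraph m) c}.Nonempty := by
  classical
  set c : Sym2 (Fin 4 × Fin m) → ℕ := fun e => (Finset.univ (α := Sym2 (Fin 4 × Fin m))).toList.idxOf e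
  refine ⟨(Finset.univ (α := Sym2 (Fin 4 × Fin m))).toList.length, c, fun e _ =>
    List.idxOf_lt_length_iff.mpr (by simp), ?_⟩
  have hcinj : Function.Injective c := by
    intro a b hab
    have ha : a ∈ (Finset.univ (α := Sym2 (Fin 4 × Fin m))).toList := by simp
    have hb : b ∈ (Finset.univ (α := Sym2 (Fin 4 × Fin m))).toList := by simp
    calc a = (Finset.univ (α := Sym2 (Fin 4 × Fin m))).toList.get ⟨c a, List.idxOf_lt_length_iff.mpr ha⟩ := by
            simp [c, List.idxOf_get]
    _ = b := by simp only [hab]; simp [c, List.idxOf_get]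
  intro u v huv
  obtain ⟨w⟩ := hgraph_preconnected hm u v
  refine ⟨w.bypass, w.bypass_isPath, ?_⟩
  have hne : w.bypass.edges ≠ [] := by
    intro h
    have := SimpleGraph.Walk.eq_of_length_eq_zero (by simpa [SimpleGraph.Walk.length_edges] using congrArg List.length h)
    exact huv this
  obtain ⟨e₀, he₀⟩ := List.exists_mem_of_ne_nil _ hne
  refine ⟨c e₀, ?_⟩
  have hnd : w.bypass.edges.Nodup := w.bypass_isPath.isTrail.edges_nodup
  have : w.bypass.edges.filter (fun e => c e = c e₀) = w.bypass.edges.filter (fun e => e = e₀) := by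
    apply List.filter_congr
    intro e _
    simp only [decide_eq_decide]
    exact ⟨fun h => hcinj h, fun h => by rw [h]⟩
  rw [this]
  have hcount := List.count_eq_one_of_mem hnd he₀
  rw [← hcount, List.count, List.countP_eq_length_filter]
  rfl

lemma same_color_spokes {m : ℕ} (hm : 0 < m) (c : Sym2 (Fin 4 × Fin m) → ℕ)
    (hcfc : IsCFConnected (Hgraph m) c) (i j : Fin 4) (hi : i ≠ 0) (hj : j ≠ 0) (hij : i ≠ j)
    (hcc : c s(((i:Fin 4), (⟨0,hm⟩:Fin m)), ((0:Fin 4), ⟨0,hm⟩))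
        = c s(((j:Fin 4), (⟨0,hm⟩:Fin m)), ((0:Fin 4), ⟨0,hm⟩))) : False := by
  obtain ⟨p, hp, col, hcol⟩ := hcfc (i, ⟨0,hm⟩) (j, ⟨0,hm⟩)
    (fun e => hij (congrArg Prod.fst e))
  rw [two_spoke_path_edges hm i j hi hj hij p hp] at hcol
  have h2 : c s(((0:Fin 4), (⟨0,hm⟩:Fin m)), (j, ⟨0,hm⟩))
      = c s(((i:Fin 4), (⟨0,hm⟩:Fin m)), ((0:Fin 4), ⟨0,hm⟩)) := by
    rw [Sym2.eq_swap]; exact hcc.symm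
  by_cases hc : c s(((i:Fin 4), (⟨0,hm⟩:Fin m)), ((0:Fin 4), ⟨0,hm⟩)) = col
  · simp [List.filter, hc, h2.trans hc] at hcol
  · have hc2 : c s(((0:Fin 4), (⟨0,hm⟩:Fin m)), (j, ⟨0,hm⟩)) ≠ col := by
      rw [h2]; exact hc
    simp [List.filter, hc, hc2] at hcol

theorem stmt_16 (m : ℕ) (hm : 4 ≤ m) :
    (∀ v, m - 1 ≤ vdeg (Hgraph m) v) ∧ (∃ v, vdeg (Hgraph m) v = m - 1) ∧
    3 ≤ cfcNum (Hgraph m) := by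
  have hm0 : 0 < m := by omega
  refine ⟨deg_lower, ⟨_, deg_exact hm⟩, ?_⟩
  refine le_csInf (cfc_set_nonempty hm0) ?_
  rintro k ⟨c, hbound, hcfc⟩
  by_contra hk
  push_neg at hk
  have hb2 : ∀ i : Fin 4, i ≠ 0 →
      c s(((i:Fin 4), (⟨0,hm0⟩:Fin m)), ((0:Fin 4), ⟨0,hm0⟩)) < 2 := by
    intro i hi
    have : (Hgraph m).Adj (i, ⟨0,hm0⟩) ((0:Fin 4), ⟨0,hm0⟩) :=
      hgraph_adj.mpr ⟨fun e => hi (congrArg Prod.fst e), Or.inr ⟨rfl, rfl, Or.inr rfl⟩⟩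
    exact lt_of_lt_of_le (hbound _ (((Hgraph m).mem_edgeSet).mpr this)) (by omega)
  set c1 := c s(((1:Fin 4), (⟨0,hm0⟩:Fin m)), ((0:Fin 4), ⟨0,hm0⟩)) with h1
  set c2 := c s(((2:Fin 4), (⟨0,hm0⟩:Fin m)), ((0:Fin 4), ⟨0,hm0⟩)) with h2
  set c3 := c s(((3:Fin 4), (⟨0,hm0⟩:Fin m)), ((0:Fin 4), ⟨0,hm0⟩)) with h3
  have b1 := hb2 1 (by decide)
  have b2 := hb2 2 (by decide)
  have b3 := hb2 3 (by decide)
  by_cases e12 : c1 = c2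
  · exact same_color_spokes hm0 c hcfc 1 2 (by decide) (by decide) (by decide) e12
  by_cases e13 : c1 = c3
  · exact same_color_spokes hm0 c hcfc 1 3 (by decide) (by decide) (by decide) e13
  have e23 : c2 = c3 := by omega
  exact same_color_spokes hm0 c hcfc 2 3 (by decide) (by decide) (by decide) e23
end

section
/- Let n ≡ 2 (mod 3) with 11 ≤ n ≤ 32, and let G be obtained from three disjoint complete graphs G₁, G₂, G₃ each of order (n−2)/3 and a path v₁u₁u₂v₂v₃ of order 5 by identifying, for each i ∈ {1,2,3}, a vertex of Gᵢ with vᵢ. Then deg(x)+deg(y) ≥ (2n−9)/5 for every pair of non-adjacent vertices x, y of G, and cfc(G) ≥ 3. -/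
open SimpleGraph

section Dev
variable (m : ℕ)

abbrev Vtx := (Fin 3 × Fin m) ⊕ Fin 2

def adjP : Vtx m → Vtx m → Prop
  | .inl (i,j), .inl (i',j') => (i = i' ∧ j ≠ j') ∨ (j.val = 0 ∧ j'.val = 0 ∧ ((i = 1 ∧ i' = 2) ∨ (i = 2 ∧ i' = 1)))
  | .inl (i,j), .inr k => j.val = 0 ∧ ((i = 0 ∧ k = 0) ∨ (i = 1 ∧ k = 1))
  | .inr k, .inl (i,j) => j.val = 0 ∧ ((i = 0 ∧ k = 0) ∨ (i = 1 ∧ k = 1))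
  | .inr k, .inr k' => k ≠ k'

def myG : SimpleGraph (Vtx m) where
  Adj := adjP m
  symm := by
    constructor
    rintro (⟨i,j⟩|k) (⟨i',j'⟩|k') h <;> simp only [adjP] at * <;> tauto
  loopless := by
    constructor
    rintro (⟨i,j⟩|k) h <;> simp only [adjP] at h
    · rcases h with ⟨_,h⟩|⟨_,_,⟨h1,h2⟩|⟨h1,h2⟩⟩
      · exact h rfl
      all_goals rw [h1] at h2; exact absurd h2 (by decide)
    · exact h rfl

variable {m} [NeZero m]

def v1 : Vtx m := .inl (0, 0)
def v2 : Vtx m := .inl (1, 0)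
def v3 : Vtx m := .inl (2, 0)
def u1 : Vtx m := .inr 0
def u2 : Vtx m := .inr 1

lemma adj_iff {x y : Vtx m} : (myG m).Adj x y ↔ adjP m x y := Iff.rfl

-- neighbor characterizations
lemma nbr_v1 {z : Vtx m} (h : (myG m).Adj v1 z) :
    z = u1 ∨ ∃ j : Fin m, j ≠ 0 ∧ z = .inl (0, j) := by
  rcases z with ⟨i,j⟩|k
  · right
    simp only [adj_iff, v1, adjP] at h
    rcases h with ⟨hi,hj⟩|⟨_,_,⟨hi,_⟩|⟨hi,_⟩⟩
    · exact ⟨j, Ne.symm hj, by rw [hi]⟩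
    all_goals exact absurd hi (by decide)
  · left
    simp only [adj_iff, v1, adjP] at h
    rcases h with ⟨_, ⟨_,hk⟩|⟨hi,_⟩⟩
    · simp [u1, hk]
    · exact absurd hi (by decide)

lemma nbr_u1 {z : Vtx m} (h : (myG m).Adj u1 z) : z = v1 ∨ z = u2 := by
  rcases z with ⟨i,j⟩|k
  · left
    simp only [adj_iff, u1, adjP] at h
    rcases h with ⟨hj, ⟨hi,_⟩|⟨hi,hk⟩⟩
    · simp [v1, hi, Fin.ext_iff, hj]
    · exact absurd hk (by decide)
  · right
    simp only [adj_iff, u1, adjP] at h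
    simp [u2]
    omega

lemma nbr_u2 {z : Vtx m} (h : (myG m).Adj u2 z) : z = v2 ∨ z = u1 := by
  rcases z with ⟨i,j⟩|k
  · left
    simp only [adj_iff, u2, adjP] at h
    rcases h with ⟨hj, ⟨hi,hk⟩|⟨hi,_⟩⟩
    · exact absurd hk (by decide)
    · simp [v2, hi, Fin.ext_iff, hj]
  · right
    simp only [adj_iff, u2, adjP] at h
    simp [u1]
    omega

lemma nbr_v2 {z : Vtx m} (h : (myG m).Adj v2 z) :
    z = u2 ∨ z = v3 ∨ ∃ j : Fin m, j ≠ 0 ∧ z = .inl (1, j) := by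
  rcases z with ⟨i,j⟩|k
  · simp only [adj_iff, v2, adjP] at h
    rcases h with ⟨hi,hj⟩|⟨_,hj,⟨_,hi'⟩|⟨hi,_⟩⟩
    · right; right
      exact ⟨j, Ne.symm hj, by rw [hi]⟩
    · right; left
      simp [v3, hi', Fin.ext_iff, hj]
    · exact absurd hi (by decide)
  · left
    simp only [adj_iff, v2, adjP] at h
    rcases h with ⟨_, ⟨hi,_⟩|⟨_,hk⟩⟩
    · exact absurd hi (by decide)
    · simp [u2, hk]

end Dev

section Cut
variable {m : ℕ} [NeZero m]

lemma cut_exit {A : Set (Vtx m)} {v : Vtx m}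
    (H : ∀ p q, (myG m).Adj p q → p ∈ A → q ∉ A → q = v) :
    ∀ {x y : Vtx m} (w : (myG m).Walk x y), x ∈ A → y ∉ A → v ∈ w.support := by
  intro x y w
  induction w with
  | nil => intro hx hy; exact absurd hx hy
  | @cons a b c h w ih =>
    intro hx hy
    rw [Walk.support_cons]
    by_cases hb : b ∈ A
    · exact List.mem_cons_of_mem _ (ih hb hy)
    · have : b = v := H _ _ h hx hb
      exact List.mem_cons_of_mem _ (this ▸ w.start_mem_support)

-- I4 : clique-0 minus v1
lemma cut4 : ∀ p q, (myG m).Adj p q → (p ∈ {x : Vtx m | ∃ j : Fin m, j ≠ 0 ∧ x = .inl (0, j)}) →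
    (q ∉ {x : Vtx m | ∃ j : Fin m, j ≠ 0 ∧ x = .inl (0, j)}) → q = v1 := by
  rintro p q h ⟨j, hj, rfl⟩ hq
  rcases q with ⟨i',j'⟩|k
  · simp only [adj_iff, adjP] at h
    rcases h with ⟨hi,_⟩|⟨hj0,_,_⟩
    · subst hi
      have : j' = 0 := by
        by_contra hne
        exact hq ⟨j', hne, rfl⟩
      simp [v1, this]
    · exact absurd hj0 (fun h0 => hj (Fin.ext (by simp [h0])))
  · simp only [adj_iff, adjP] at h
    exact absurd h.1 (fun h0 => hj (Fin.ext (by simp [h0])))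

-- I3 : clique-1 minus v2
lemma cut3 : ∀ p q, (myG m).Adj p q → (p ∈ {x : Vtx m | ∃ j : Fin m, j ≠ 0 ∧ x = .inl (1, j)}) →
    (q ∉ {x : Vtx m | ∃ j : Fin m, j ≠ 0 ∧ x = .inl (1, j)}) → q = v2 := by
  rintro p q h ⟨j, hj, rfl⟩ hq
  rcases q with ⟨i',j'⟩|k
  · simp only [adj_iff, adjP] at h
    rcases h with ⟨hi,_⟩|⟨hj0,_,_⟩
    · subst hi
      have : j' = 0 := by
        by_contra hne
        exact hq ⟨j', hne, rfl⟩
      simp [v2, this]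
    · exact absurd hj0 (fun h0 => hj (Fin.ext (by simp [h0])))
  · simp only [adj_iff, adjP] at h
    exact absurd h.1 (fun h0 => hj (Fin.ext (by simp [h0])))

-- I1 : clique 0, exit u1
lemma cut1 : ∀ p q, (myG m).Adj p q → (p ∈ {x : Vtx m | ∃ j : Fin m, x = .inl (0, j)}) →
    (q ∉ {x : Vtx m | ∃ j : Fin m, x = .inl (0, j)}) → q = u1 := by
  rintro p q h ⟨j, rfl⟩ hq
  rcases q with ⟨i',j'⟩|k
  · simp only [adj_iff, adjP] at h
    rcases h with ⟨hi,_⟩|⟨_,_,⟨hi,_⟩|⟨hi,_⟩⟩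
    · exact absurd ⟨j', by rw [← hi]⟩ hq
    all_goals exact absurd hi (by decide)
  · simp only [adj_iff, adjP] at h
    rcases h.2 with ⟨_,hk⟩|⟨hi,_⟩
    · simp [u1, hk]
    · exact absurd hi (by decide)

-- I2 : clique 0 ∪ {u1}, exit u2
lemma cut2 : ∀ p q, (myG m).Adj p q → (p ∈ {x : Vtx m | (∃ j : Fin m, x = .inl (0, j)) ∨ x = u1}) →
    (q ∉ {x : Vtx m | (∃ j : Fin m, x = .inl (0, j)) ∨ x = u1}) → q = u2 := by
  rintro p q h (⟨j, rfl⟩|rfl) hq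
  · have := cut1 _ q h ⟨j, rfl⟩ (fun hh => hq (Or.inl hh))
    exact absurd (Or.inr this) hq
  · rcases nbr_u1 h with rfl | rfl
    · exact absurd (Or.inl ⟨0, rfl⟩) hq
    · rfl

end Cut

section Paths
variable {m : ℕ} [NeZero m]

lemma u2_not_A4 : u2 ∉ {x : Vtx m | ∃ j : Fin m, j ≠ 0 ∧ x = .inl (0, j)} := by
  rintro ⟨j, _, h⟩; exact absurd h (by simp [u2])

lemma path_v1_u2 (p : (myG m).Walk v1 u2) (hp : p.IsPath) :
    p.edges = [s(v1, u1), s(u1, u2)] := by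
  cases p with
  | @cons _ z _ h q =>
    rw [Walk.cons_isPath_iff] at hp
    rcases nbr_v1 h with rfl | ⟨j, hj, rfl⟩
    · cases q with
      | @cons _ z' _ h' r =>
        rcases nbr_u1 h' with rfl | rfl
        · exact absurd (List.mem_cons_of_mem _ r.start_mem_support) hp.2
        · rw [Walk.cons_isPath_iff] at hp
          rw [Walk.isPath_iff_eq_nil.1 hp.1.1]
          simp
    · exact absurd (cut_exit cut4 q ⟨j, hj, rfl⟩ u2_not_A4) hp.2

end Paths

section Paths2
variable {m : ℕ} [NeZero m]

lemma v2_not_A1 : v2 ∉ {x : Vtx m | ∃ j : Fin m, x = .inl (0, j)} := by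
  rintro ⟨j, h⟩
  simp only [v2, Sum.inl.injEq, Prod.mk.injEq] at h
  exact absurd h.1 (by decide)

lemma v3_not_A2 : v3 ∉ {x : Vtx m | (∃ j : Fin m, x = .inl (0, j)) ∨ x = u1} := by
  rintro (⟨j, h⟩ | h)
  · simp only [v3, Sum.inl.injEq, Prod.mk.injEq] at h
    exact absurd h.1 (by decide)
  · exact absurd h (by simp [v3, u1])

lemma v3_not_A3 : v3 ∉ {x : Vtx m | ∃ j : Fin m, j ≠ 0 ∧ x = .inl (1, j)} := by
  rintro ⟨j, _, h⟩
  simp only [v3, Sum.inl.injEq, Prod.mk.injEq] at h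
  exact absurd h.1 (by decide)

lemma path_u1_v2 (p : (myG m).Walk u1 v2) (hp : p.IsPath) :
    p.edges = [s(u1, u2), s(u2, v2)] := by
  cases p with
  | @cons _ z _ h q =>
    rw [Walk.cons_isPath_iff] at hp
    rcases nbr_u1 h with rfl | rfl
    · exact absurd (cut_exit cut1 q ⟨0, rfl⟩ v2_not_A1) hp.2
    · cases q with
      | @cons _ z' _ h' r =>
        rcases nbr_u2 h' with rfl | rfl
        · rw [Walk.cons_isPath_iff] at hp
          rw [Walk.isPath_iff_eq_nil.1 hp.1.1]
          simp
        · exact absurd (List.mem_cons_of_mem _ r.start_mem_support) hp.2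

lemma path_u2_v3 (p : (myG m).Walk u2 v3) (hp : p.IsPath) :
    p.edges = [s(u2, v2), s(v2, v3)] := by
  cases p with
  | @cons _ z _ h q =>
    rw [Walk.cons_isPath_iff] at hp
    rcases nbr_u2 h with rfl | rfl
    · cases q with
      | @cons _ z' _ h' r =>
        rw [Walk.cons_isPath_iff] at hp
        rcases nbr_v2 h' with rfl | rfl | ⟨j, hj, rfl⟩
        · exact absurd r.start_mem_support (by simpa using hp.2)
        · rw [Walk.isPath_iff_eq_nil.1 hp.1.1]
          simp
        · exact absurd (cut_exit cut3 r ⟨j, hj, rfl⟩ v3_not_A3) hp.1.2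
    · exact absurd (cut_exit cut2 q (Or.inr rfl) v3_not_A2) hp.2

lemma v3_not_A4 : v3 ∉ {x : Vtx m | ∃ j : Fin m, j ≠ 0 ∧ x = .inl (0, j)} := by
  rintro ⟨j, _, h⟩
  simp only [v3, Sum.inl.injEq, Prod.mk.injEq] at h
  exact absurd h.1 (by decide)

lemma path_v1_v3 (p : (myG m).Walk v1 v3) (hp : p.IsPath) :
    p.edges = [s(v1, u1), s(u1, u2), s(u2, v2), s(v2, v3)] := by
  cases p with
  | @cons _ z _ h q =>
    rw [Walk.cons_isPath_iff] at hp
    rcases nbr_v1 h with rfl | ⟨j, hj, rfl⟩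
    · cases q with
      | @cons _ z' _ h' r =>
        rw [Walk.cons_isPath_iff] at hp
        rcases nbr_u1 h' with rfl | rfl
        · exact absurd r.start_mem_support (by simpa using hp.2)
        · cases r with
          | @cons _ z'' _ h'' s =>
            rw [Walk.cons_isPath_iff] at hp
            rcases nbr_u2 h'' with rfl | rfl
            · cases s with
              | @cons _ z''' _ h''' t =>
                rw [Walk.cons_isPath_iff] at hp
                rcases nbr_v2 h''' with rfl | rfl | ⟨j, hj, rfl⟩
                · exact absurd t.start_mem_support (by simpa using hp.1.1.2)
                · rw [Walk.isPath_iff_eq_nil.1 hp.1.1.1.1]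
                  simp
                · exact absurd (cut_exit cut3 t ⟨j, hj, rfl⟩ v3_not_A3) hp.1.1.1.2
            · exact absurd s.start_mem_support (by simpa using hp.1.2)
    · exact absurd (cut_exit cut4 q ⟨j, hj, rfl⟩ v3_not_A4) hp.2

end Paths2

section Conn
variable {m : ℕ} [NeZero m]

lemma adj_v1_u1 : (myG m).Adj v1 u1 := by
  show adjP m v1 u1
  exact ⟨by simp, Or.inl ⟨rfl, rfl⟩⟩

lemma adj_u1_u2 : (myG m).Adj u1 u2 := by
  show adjP m u1 u2
  show (0 : Fin 2) ≠ 1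
  decide

lemma adj_u2_v2 : (myG m).Adj u2 v2 := by
  show adjP m u2 v2
  exact ⟨by simp, Or.inr ⟨rfl, rfl⟩⟩

lemma adj_v2_v3 : (myG m).Adj v2 v3 := by
  show adjP m v2 v3
  exact Or.inr ⟨by simp, by simp, Or.inl ⟨rfl, rfl⟩⟩

lemma adj_clique {i : Fin 3} {j j' : Fin m} (h : j ≠ j') :
    (myG m).Adj (.inl (i, j)) (.inl (i, j')) := Or.inl ⟨rfl, h⟩

lemma reach_u1 (x : Vtx m) : (myG m).Reachable x u1 := by
  have h0 : (myG m).Reachable v1 u1 := adj_v1_u1.reachable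
  have h1 : (myG m).Reachable v2 u1 :=
    (adj_u2_v2.symm.reachable).trans (adj_u1_u2.symm.reachable)
  have h2 : (myG m).Reachable v3 u1 := (adj_v2_v3.symm.reachable).trans h1
  rcases x with ⟨i, j⟩ | k
  · have hr : (myG m).Reachable (.inl (i, j)) (.inl (i, 0)) := by
      by_cases hj : j = 0
      · rw [hj]
      · exact (adj_clique hj).reachable
    refine hr.trans ?_
    fin_cases i
    · exact h0
    · exact h1
    · exact h2
  · fin_cases k
    · rfl
    · exact adj_u1_u2.symm.reachable

lemma myG_connected : (myG m).Connected := by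
  rw [connected_iff]
  exact ⟨fun x y => (reach_u1 x).trans (reach_u1 y).symm, ⟨u1⟩⟩

end Conn

section Deg
variable {m : ℕ} [NeZero m]

lemma deg_inl (i : Fin 3) (j : Fin m) : m - 1 ≤ vdeg (myG m) (.inl (i, j)) := by
  have hsub : (fun j' => (Sum.inl (i, j') : Vtx m)) '' {j}ᶜ ⊆ (myG m).neighborSet (.inl (i, j)) := by
    rintro _ ⟨j', hj', rfl⟩
    exact adj_clique (fun hh => hj' (by simp [hh.symm]))
  have hinj : Function.Injective (fun j' => (Sum.inl (i, j') : Vtx m)) := by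
    intro a b hab; simpa using hab
  have h1 : ((fun j' => (Sum.inl (i, j') : Vtx m)) '' {j}ᶜ).ncard = ({j}ᶜ : Set (Fin m)).ncard :=
    Set.ncard_image_of_injective _ hinj
  have h2 : ({j}ᶜ : Set (Fin m)).ncard = m - 1 := by
    rw [Set.ncard_eq_toFinset_card', Set.toFinset_compl, Set.toFinset_singleton,
      Finset.card_compl, Finset.card_singleton, Fintype.card_fin]
  calc m - 1 = ((fun j' => (Sum.inl (i, j') : Vtx m)) '' {j}ᶜ).ncard := by rw [h1, h2]
    _ ≤ _ := Set.ncard_le_ncard hsub (Set.toFinite _)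

lemma deg_inr (k : Fin 2) : 2 ≤ vdeg (myG m) (.inr k) := by
  fin_cases k
  · have hsub : ({v1, u2} : Set (Vtx m)) ⊆ (myG m).neighborSet (u1 : Vtx m) := by
      rintro x (rfl | rfl)
      · exact adj_v1_u1.symm
      · exact adj_u1_u2 (m := m)
    have : ({v1, u2} : Set (Vtx m)).ncard = 2 := Set.ncard_pair (show (v1 : Vtx m) ≠ u2 by simp [v1, u2])
    calc 2 = ({v1, u2} : Set (Vtx m)).ncard := this.symm
      _ ≤ _ := Set.ncard_le_ncard hsub (Set.toFinite _)
  · have hsub : ({u1, v2} : Set (Vtx m)) ⊆ (myG m).neighborSet (u2 : Vtx m) := by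
      rintro x (rfl | rfl)
      · exact (adj_u1_u2 (m := m)).symm
      · exact adj_u2_v2
    have : ({u1, v2} : Set (Vtx m)).ncard = 2 := Set.ncard_pair (show (u1 : Vtx m) ≠ v2 by simp [u1, v2])
    calc 2 = ({u1, v2} : Set (Vtx m)).ncard := this.symm
      _ ≤ _ := Set.ncard_le_ncard hsub (Set.toFinite _)

end Deg

section Color
variable {m : ℕ} [NeZero m]

lemma no_two_coloring (c : Sym2 (Vtx m) → ℕ)
    (hc : ∀ e ∈ (myG m).edgeSet, c e ≤ 1) (h : IsCFConnected (myG m) c) : False := by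
  have ha : c s(v1, u1) ≤ 1 := hc _ ((myG m).mem_edgeSet.mpr adj_v1_u1)
  have hb : c s(u1, u2) ≤ 1 := hc _ ((myG m).mem_edgeSet.mpr adj_u1_u2)
  have hd : c s(u2, v2) ≤ 1 := hc _ ((myG m).mem_edgeSet.mpr adj_u2_v2)
  have he : c s(v2, v3) ≤ 1 := hc _ ((myG m).mem_edgeSet.mpr adj_v2_v3)
  have hab : c s(v1, u1) ≠ c s(u1, u2) := by
    obtain ⟨p, hp, col, hcol⟩ := h v1 u2 (by simp [v1, u2])
    rw [path_v1_u2 p hp] at hcol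
    by_cases h1 : c s(v1, u1) = col <;> by_cases h2 : c s(u1, u2) = col <;>
      simp [List.filter, h1, h2] at hcol <;> omega
  have hbd : c s(u1, u2) ≠ c s(u2, v2) := by
    obtain ⟨p, hp, col, hcol⟩ := h u1 v2 (by simp [u1, v2])
    rw [path_u1_v2 p hp] at hcol
    by_cases h1 : c s(u1, u2) = col <;> by_cases h2 : c s(u2, v2) = col <;>
      simp [List.filter, h1, h2] at hcol <;> omega
  have hde : c s(u2, v2) ≠ c s(v2, v3) := by
    obtain ⟨p, hp, col, hcol⟩ := h u2 v3 (by simp [u2, v3])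
    rw [path_u2_v3 p hp] at hcol
    by_cases h1 : c s(u2, v2) = col <;> by_cases h2 : c s(v2, v3) = col <;>
      simp [List.filter, h1, h2] at hcol <;> omega
  obtain ⟨p, hp, col, hcol⟩ := h v1 v3 (by
      simp only [v1, v3, ne_eq, Sum.inl.injEq, Prod.mk.injEq, not_and]
      intro hh; exact absurd hh (by decide))
  rw [path_v1_v3 p hp] at hcol
  by_cases h1 : c s(v1, u1) = col <;> by_cases h2 : c s(u1, u2) = col <;>
    by_cases h3 : c s(u2, v2) = col <;> by_cases h4 : c s(v2, v3) = col <;>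
    simp [List.filter, h1, h2, h3, h4] at hcol <;> omega

lemma cf_exists : ∃ k, k ∈ {k | ∃ c : Sym2 (Vtx m) → ℕ,
    (∀ e ∈ (myG m).edgeSet, c e < k) ∧ IsCFConnected (myG m) c} := by
  classical
  set N := Fintype.card (Sym2 (Vtx m)) with hN
  refine ⟨N, fun s => (Fintype.equivFin (Sym2 (Vtx m)) s : ℕ), fun e _ => (Fintype.equivFin _ e).isLt, ?_⟩
  have hinj : Function.Injective (fun s => ((Fintype.equivFin (Sym2 (Vtx m)) s : ℕ))) := by
    intro a b hab
    exact (Fintype.equivFin _).injective (Fin.val_injective hab)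
  intro x y hxy
  obtain ⟨w⟩ := (myG_connected (m := m)).preconnected x y
  refine ⟨w.toPath, w.toPath.2, ?_⟩
  cases hE : (w.toPath : (myG m).Walk x y).edges with
  | nil =>
    exfalso
    have : (w.toPath : (myG m).Walk x y).Nil := by
      rw [Walk.nil_iff_length_eq, ← Walk.length_edges, hE]; rfl
    exact hxy (Walk.Nil.eq this)
  | cons e0 rest =>
    refine ⟨(fun s => ((Fintype.equivFin (Sym2 (Vtx m)) s : ℕ))) e0, ?_⟩
    have hnodup : ((w.toPath : (myG m).Walk x y).edges).Nodup := w.toPath.2.edges_nodup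
    rw [hE] at hnodup
    have heq : ((e0 :: rest).filter
        (fun e => (fun s => ((Fintype.equivFin (Sym2 (Vtx m)) s : ℕ))) e =
          (fun s => ((Fintype.equivFin (Sym2 (Vtx m)) s : ℕ))) e0)) =
        ((e0 :: rest).filter (· == e0)) := by
      apply List.filter_congr
      intro z _
      by_cases hz : z = e0
      · simp [hz]
      · simp [hz, hinj.ne hz]
    rw [heq, ← List.countP_eq_length_filter, ← List.count_eq_countP,
      List.count_eq_one_of_mem hnodup List.mem_cons_self]

end Color


theorem stmt_19 (n : ℕ) (hmod : n % 3 = 2) (h1 : 11 ≤ n) (h2 : n ≤ 32) :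
    ∃ (V : Type) (_ : Fintype V) (G : SimpleGraph V),
      Fintype.card V = n ∧ G.Connected ∧
      (∀ x y : V, x ≠ y → ¬G.Adj x y →
        (2 * (n : ℚ) - 9) / 5 ≤ (vdeg G x : ℚ) + (vdeg G y : ℚ)) ∧
      3 ≤ cfcNum G := by
  set m := (n - 2) / 3 with hm_def
  have hn : n = 3 * m + 2 := by omega
  have hm3 : 3 ≤ m := by omega
  have hm10 : m ≤ 10 := by omega
  haveI : NeZero m := ⟨by omega⟩
  have hm3q : (3 : ℚ) ≤ (m : ℚ) := by exact_mod_cast hm3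
  have hm10q : (m : ℚ) ≤ 10 := by exact_mod_cast hm10
  refine ⟨Vtx m, inferInstance, myG m, ?_, myG_connected, ?_, ?_⟩
  · simp only [Fintype.card_sum, Fintype.card_prod, Fintype.card_fin]
    omega
  · intro x y hne hnadj
    have cast_inl : ∀ (i : Fin 3) (j : Fin m), (m : ℚ) - 1 ≤ (vdeg (myG m) (.inl (i, j)) : ℚ) := by
      intro i j
      have h' := deg_inl (m := m) i j
      have : ((m - 1 : ℕ) : ℚ) ≤ (vdeg (myG m) (.inl (i, j)) : ℚ) := by exact_mod_cast h'
      rwa [Nat.cast_sub (by omega), Nat.cast_one] at this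
    have cast_inr : ∀ (k : Fin 2), (2 : ℚ) ≤ (vdeg (myG m) (.inr k) : ℚ) := by
      intro k
      exact_mod_cast deg_inr (m := m) k
    rcases x with ⟨i, j⟩ | k <;> rcases y with ⟨i', j'⟩ | k'
    · have c1 := cast_inl i j
      have c2 := cast_inl i' j'
      rw [hn]; push_cast; linarith
    · have c1 := cast_inl i j
      have c2 := cast_inr k'
      rw [hn]; push_cast; linarith
    · have c1 := cast_inr k
      have c2 := cast_inl i' j'
      rw [hn]; push_cast; linarith
    · exact absurd (show (myG m).Adj (.inr k) (.inr k') from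
        fun hh => hne (by rw [hh])) hnadj
  · by_contra hlt
    push_neg at hlt
    have hne : Set.Nonempty {k | ∃ c : Sym2 (Vtx m) → ℕ,
        (∀ e ∈ (myG m).edgeSet, c e < k) ∧ IsCFConnected (myG m) c} := cf_exists
    have hmem := Nat.sInf_mem hne
    obtain ⟨c, hc, hcf⟩ := hmem
    refine no_two_coloring c (fun e he => ?_) hcf
    have h3 : c e < cfcNum (myG m) := hc e he
    omega
end
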